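/- For an orthohedral set S and k ≤ rk(S), the action of G_k(S) on the rank-k germs Γ^k(S) induces an isomorphism G_k(S)/C(Γ^k(S)) ≅ sym(Γ^k(S)), the finitary symmetric group on Γ^k(S). -/

import Mathlib

open Pointwise

namespace PeiPaper

/-- Points of the face of the standard orthant spanned by the canonical basis vectors in `Y`. -/
def stdFace (N : ℕ) (Y : Finset (Fin N)) : Set (Fin N → ℤ) :=
  {v | (∀ i, 0 ≤ v i) ∧ ∀ i, i ∉ Y → v i = 0}

/-- Integral orthogonal matrix. -/
def IsOrthMat {N : ℕ} (A : Matrix (Fin N) (Fin N) ℤ) : Prop :=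
  A * A.transpose = 1

/-- `L` is an integral orthant of rank `k` in `ℤ^N`: an affine-orthogonal image of a
rank-`k` face of the standard orthant. -/
def IsOrthantOfRank {N : ℕ} (L : Set (Fin N → ℤ)) (k : ℕ) : Prop :=
  ∃ (a : Fin N → ℤ) (A : Matrix (Fin N) (Fin N) ℤ) (Y : Finset (Fin N)),
    IsOrthMat A ∧ Y.card = k ∧ L = (fun v => a + A.mulVec v) '' stdFace N Y

def IsOrthant {N : ℕ} (L : Set (Fin N → ℤ)) : Prop := ∃ k, IsOrthantOfRank L k

/-- `S` is orthohedral: a finite union of integral orthants. -/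
def IsOrthohedral {N : ℕ} (S : Set (Fin N → ℤ)) : Prop :=
  ∃ 𝓛 : Set (Set (Fin N → ℤ)), 𝓛.Finite ∧ (∀ L ∈ 𝓛, IsOrthant L) ∧ S = ⋃₀ 𝓛

/-- The rank of a set: the maximal rank of an orthant contained in it. -/
noncomputable def orthRank {N : ℕ} (S : Set (Fin N → ℤ)) : ℕ :=
  sSup {k | ∃ L, IsOrthantOfRank L k ∧ L ⊆ S}

/-- Commensurability: the intersection is nonempty and has the same rank as both sets. -/
def Commensurable {N : ℕ} (L L' : Set (Fin N → ℤ)) : Prop :=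
  (L ∩ L').Nonempty ∧ orthRank L = orthRank (L ∩ L') ∧ orthRank L' = orthRank (L ∩ L')

/-- The rank-`k` orthants contained in `S`. -/
def germSet {N : ℕ} (S : Set (Fin N → ℤ)) (k : ℕ) : Set (Set (Fin N → ℤ)) :=
  {L | IsOrthantOfRank L k ∧ L ⊆ S}

/-- The rank-`k` germs of `S`: commensurability classes of rank-`k` orthants of `S`. -/
def Germ {N : ℕ} (S : Set (Fin N → ℤ)) (k : ℕ) : Type _ :=
  Quot (fun L L' : germSet S k => Commensurable L.1 L'.1)

def germOf {N : ℕ} (S : Set (Fin N → ℤ)) (k : ℕ) (L : germSet S k) : Germ S k :=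
  Quot.mk _ L

/-- The number of rank-`k` germs of `S` (as a natural number; `0` if infinite). -/
noncomputable def heightAt {N : ℕ} (S : Set (Fin N → ℤ)) (k : ℕ) : ℕ :=
  Nat.card (Germ S k)

/-- The height of an orthohedral set: the number of germs of maximal rank. -/
noncomputable def height {N : ℕ} (S : Set (Fin N → ℤ)) : ℕ :=
  heightAt S (orthRank S)

/-- `f` is (the restriction of) an isometry of `ℤ^N` on `L`. -/
def IsometricOn {N : ℕ} (f : (Fin N → ℤ) → (Fin N → ℤ)) (L : Set (Fin N → ℤ)) : Prop :=
  ∃ (a : Fin N → ℤ) (A : Matrix (Fin N) (Fin N) ℤ),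
    IsOrthMat A ∧ ∀ x ∈ L, f x = a + A.mulVec x

/-- `f` is (the restriction of) a translation on `L`. -/
def TranslationOn {N : ℕ} (f : (Fin N → ℤ) → (Fin N → ℤ)) (L : Set (Fin N → ℤ)) : Prop :=
  ∃ a : Fin N → ℤ, ∀ x ∈ L, f x = a + x

/-- `f` is a piecewise-Euclidean-isometric map on `S`. -/
def IsPeiMapOn {N : ℕ} (S : Set (Fin N → ℤ)) (f : (Fin N → ℤ) → (Fin N → ℤ)) : Prop :=
  ∃ 𝓛 : Set (Set (Fin N → ℤ)), 𝓛.Finite ∧ (∀ L ∈ 𝓛, IsOrthant L) ∧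
    S = ⋃₀ 𝓛 ∧ 𝓛.PairwiseDisjoint id ∧ ∀ L ∈ 𝓛, IsometricOn f L

/-- `f` is a piecewise-Euclidean-translation map on `S`. -/
def IsPetMapOn {N : ℕ} (S : Set (Fin N → ℤ)) (f : (Fin N → ℤ) → (Fin N → ℤ)) : Prop :=
  ∃ 𝓛 : Set (Set (Fin N → ℤ)), 𝓛.Finite ∧ (∀ L ∈ 𝓛, IsOrthant L) ∧
    S = ⋃₀ 𝓛 ∧ 𝓛.PairwiseDisjoint id ∧ ∀ L ∈ 𝓛, TranslationOn f L

def IsPeiIso {N : ℕ} (S S' : Set (Fin N → ℤ)) (f : (Fin N → ℤ) → (Fin N → ℤ)) : Prop :=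
  IsPeiMapOn S f ∧ Set.InjOn f S ∧ f '' S = S'

def PeiIsomorphic {N : ℕ} (S S' : Set (Fin N → ℤ)) : Prop := ∃ f, IsPeiIso S S' f

def IsPetIso {N : ℕ} (S S' : Set (Fin N → ℤ)) (f : (Fin N → ℤ) → (Fin N → ℤ)) : Prop :=
  IsPetMapOn S f ∧ Set.InjOn f S ∧ f '' S = S'

def PetIsomorphic {N : ℕ} (S S' : Set (Fin N → ℤ)) : Prop := ∃ f, IsPetIso S S' f

/-- A pei-permutation of `S`: a permutation of `ℤ^N` supported on `S` which is pei on `S`. -/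
def IsPeiPerm {N : ℕ} (S : Set (Fin N → ℤ)) (g : Equiv.Perm (Fin N → ℤ)) : Prop :=
  IsPeiMapOn S ⇑g ∧ ∀ x ∉ S, g x = x

/-- The element `g` has rank at most `k`: it is supported on an orthohedral set of rank `≤ k`. -/
def rankLE {N : ℕ} (g : Equiv.Perm (Fin N → ℤ)) (k : ℕ) : Prop :=
  ∃ T : Set (Fin N → ℤ), IsOrthohedral T ∧ orthRank T ≤ k ∧ ∀ x ∉ T, g x = x

/-- `g` fixes every rank-`k` germ of `S`. -/
def FixesGerm {N : ℕ} (S : Set (Fin N → ℤ)) (k : ℕ) (g : Equiv.Perm (Fin N → ℤ)) : Prop :=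
  ∀ L, IsOrthantOfRank L k → L ⊆ S →
    ∃ L', IsOrthantOfRank L' k ∧ L' ⊆ L ∧ Commensurable L L' ∧
      IsometricOn (⇑g) L' ∧ Commensurable (⇑g '' L') L

/-- `g` fixes every rank-`k` germ of `S` and acts on its tangent coset by a translation. -/
def TranslatesGerm {N : ℕ} (S : Set (Fin N → ℤ)) (k : ℕ) (g : Equiv.Perm (Fin N → ℤ)) : Prop :=
  ∀ L, IsOrthantOfRank L k → L ⊆ S →
    ∃ L' a, IsOrthantOfRank L' k ∧ L' ⊆ L ∧ Commensurable L L' ∧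
      (∀ x ∈ L', g x = a + x) ∧ Commensurable (⇑g '' L') L

/-- `σ` is the map induced by `g` on the rank-`k` germs of `S`. -/
def InducesGermMap {N : ℕ} (S : Set (Fin N → ℤ)) (k : ℕ) (g : Equiv.Perm (Fin N → ℤ))
    (σ : Germ S k → Germ S k) : Prop :=
  ∀ L : germSet S k, ∃ (L'' : Set (Fin N → ℤ)) (M : germSet S k),
    IsOrthantOfRank L'' k ∧ L'' ⊆ L.1 ∧ Commensurable L.1 L'' ∧
    M.1 = ⇑g '' L'' ∧ σ (germOf S k L) = germOf S k M

/-- A finitary permutation which is even (has sign `1` on a finite invariant subset). -/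
def IsEvenFinitary {α : Type*} (σ : Equiv.Perm α) : Prop :=
  ∃ (F : Finset α) (σF : Equiv.Perm F),
    (∀ a ∉ F, σ a = a) ∧ (∀ a : F, σ (a : α) = (σF a : α)) ∧
    @Equiv.Perm.sign F (Classical.decEq _) inferInstance σF = 1

/-- `g` induces an even finitary permutation on the rank-`k` germs of `S`. -/
def IsEvenOnGerms {N : ℕ} (S : Set (Fin N → ℤ)) (k : ℕ) (g : Equiv.Perm (Fin N → ℤ)) : Prop :=
  ∃ σ : Equiv.Perm (Germ S k), InducesGermMap S k g ⇑σ ∧ IsEvenFinitary σ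

/-- Ordering of germs (of arbitrary ranks): `p ≤ q` if they have representatives `L ⊆ L'`. -/
def germLE {N : ℕ} (S : Set (Fin N → ℤ)) (p q : Σ k, Germ S k) : Prop :=
  ∃ (L : germSet S p.1) (L' : germSet S q.1),
    germOf S p.1 L = p.2 ∧ germOf S q.1 L' = q.2 ∧ L.1 ⊆ L'.1

/-- A maximal germ of `S`. -/
def IsMaxGerm {N : ℕ} (S : Set (Fin N → ℤ)) (p : Σ k, Germ S k) : Prop :=
  ∀ q, germLE S p q → germLE S q p

/-- A `0`-based orthant. -/
def IsBasedOrthant {N : ℕ} (L0 : Set (Fin N → ℤ)) : Prop :=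
  ∃ (A : Matrix (Fin N) (Fin N) ℤ) (Y : Finset (Fin N)),
    IsOrthMat A ∧ L0 = (fun v => A.mulVec v) '' stdFace N Y

/-- Two (oriented) parallel orthants. -/
def ParallelOrthants {N : ℕ} (L L' : Set (Fin N → ℤ)) : Prop :=
  ∃ a : Fin N → ℤ, L' = a +ᵥ L

/-- The indicator image `S_τ` of `S`: the union of the `0`-based parallel translates of
the orthants contained in `S`. -/
def indicatorImage {N : ℕ} (S : Set (Fin N → ℤ)) : Set (Fin N → ℤ) :=
  ⋃₀ {L0 | IsBasedOrthant L0 ∧ ∃ a : Fin N → ℤ, (a +ᵥ L0) ⊆ S}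

/-- The height function `h_S`: the number of maximal germs of `S` whose indicator is `L0`. -/
noncomputable def hFun {N : ℕ} (S : Set (Fin N → ℤ)) (L0 : Set (Fin N → ℤ)) : ℕ :=
  Nat.card {p : Σ k, Germ S k //
    IsMaxGerm S p ∧ ∃ L : germSet S p.1, germOf S p.1 L = p.2 ∧ ∃ a : Fin N → ℤ, L.1 = a +ᵥ L0}

/-- `S` is quasi-normal: the maximal based orthants of `S_τ` are exactly the support of `h_S`. -/
def QuasiNormal {N : ℕ} (S : Set (Fin N → ℤ)) : Prop :=
  ∀ L0 : Set (Fin N → ℤ),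
    (IsBasedOrthant L0 ∧ L0 ⊆ indicatorImage S ∧
      ∀ L1, IsBasedOrthant L1 → L1 ⊆ indicatorImage S → L0 ⊆ L1 → L1 ⊆ L0)
    ↔ (IsBasedOrthant L0 ∧ 0 < hFun S L0)

/-- The germ `q` of `S'` is the image of the germ `p` of `S` under the injective pei-map `f`. -/
def GermMapsTo {N : ℕ} (f : (Fin N → ℤ) → (Fin N → ℤ)) (S S' : Set (Fin N → ℤ))
    (p : Σ k, Germ S k) (q : Σ k, Germ S' k) : Prop :=
  p.1 = q.1 ∧ ∃ (L : germSet S p.1) (L'' : Set (Fin N → ℤ)) (M : germSet S' q.1),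
    germOf S p.1 L = p.2 ∧ IsOrthantOfRank L'' p.1 ∧ L'' ⊆ L.1 ∧ Commensurable L.1 L'' ∧
    M.1 = f '' L'' ∧ germOf S' q.1 M = q.2

/-- A stack of `h` parallel rank-`n` orthants. -/
def IsStack {N : ℕ} (S : Set (Fin N → ℤ)) (n h : ℕ) : Prop :=
  ∃ (L0 : Set (Fin N → ℤ)) (a : Fin h → (Fin N → ℤ)),
    IsOrthantOfRank L0 n ∧
    (Pairwise fun i j => Disjoint (a i +ᵥ L0) (a j +ᵥ L0)) ∧
    S = ⋃ i, a i +ᵥ L0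

/-- A coordinate half-space of `ℤ^N`. -/
def IsHalfSpace {N : ℕ} (H : Set (Fin N → ℤ)) : Prop :=
  ∃ (i : Fin N) (c : ℤ), H = {x | x i ≤ c} ∨ H = {x | c ≤ x i}

/-- The canonical embedding `ℤ^N → ℤ^{N+1}`. -/
def emb (N : ℕ) (x : Fin N → ℤ) : Fin (N + 1) → ℤ :=
  fun i => if h : (i : ℕ) < N then x ⟨i, h⟩ else 0

/-- The sum of all matrix entries of a finitely supported family of vectors. -/
noncomputable def totalSum (k : ℕ) (Γ : Type*) : (Γ →₀ (Fin k → ℤ)) →+ ℤ :=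
  Finsupp.liftAddHom (fun _ => ∑ i : Fin k, Pi.evalAddMonoidHom (fun _ => ℤ) i)

/-- The clique (flag) complex of a graph. -/
def cliqueComplex {V : Type*} (G : SimpleGraph V) : Set (Finset V) :=
  {s | s.Nonempty ∧ G.IsClique (s : Set V)}

/-- The geometric realization of a simplicial complex on vertex set `V`. -/
def realization {V : Type*} (K : Set (Finset V)) : Set (V → ℝ) :=
  {f | (∀ v, 0 ≤ f v) ∧ ∃ s ∈ K, Function.support f ⊆ ↑s ∧ ∑ v ∈ s, f v = 1}

/-- A wedge (bouquet) of `n`-spheres indexed by `ι`, with basepoint `b`. -/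
noncomputable def wedgeSpheres (ι : Type) (n : ℕ)
    (b : Metric.sphere (0 : EuclideanSpace ℝ (Fin (n + 1))) 1) : Type :=
  Quot (fun p q : Unit ⊕ (ι × Metric.sphere (0 : EuclideanSpace ℝ (Fin (n + 1))) 1) =>
    (Sum.elim (fun _ => True) (fun pr => pr.2 = b) p) ∧
    (Sum.elim (fun _ => True) (fun qr => qr.2 = b) q))

noncomputable instance (ι : Type) (n : ℕ) (b : Metric.sphere (0 : EuclideanSpace ℝ (Fin (n + 1))) 1) :
    TopologicalSpace (wedgeSpheres ι n b) :=
  letI : TopologicalSpace ι := ⊥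
  instTopologicalSpaceQuot


section Aux
variable {N : ℕ}

def Signs (ε : Fin N → ℤ) : Prop := ∀ i, ε i = 1 ∨ ε i = -1

lemma Signs.sq {ε : Fin N → ℤ} (hε : Signs ε) (i : Fin N) : ε i * ε i = 1 := by
  rcases hε i with h | h <;> rw [h] <;> ring

def orthSet (a : Fin N → ℤ) (J : Finset (Fin N)) (ε : Fin N → ℤ) : Set (Fin N → ℤ) :=
  {x | ∀ i, (i ∈ J → 0 ≤ ε i * (x i - a i)) ∧ (i ∉ J → x i = a i)}

lemma base_mem_orthSet (a : Fin N → ℤ) (J : Finset (Fin N)) (ε : Fin N → ℤ) :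
    a ∈ orthSet a J ε := fun i => ⟨fun _ => by simp, fun _ => rfl⟩

lemma orthSet_nonempty (a : Fin N → ℤ) (J : Finset (Fin N)) (ε : Fin N → ℤ) :
    (orthSet a J ε).Nonempty := ⟨a, base_mem_orthSet a J ε⟩

/-- rows of an integral orthogonal matrix -/
lemma isOrthMat_row {A : Matrix (Fin N) (Fin N) ℤ} (hA : IsOrthMat A) (i : Fin N) :
    ∃ j, (A i j = 1 ∨ A i j = -1) ∧ ∀ j', j' ≠ j → A i j' = 0 := by
  have h1 : ∑ j, A i j * A i j = 1 := by
    have := congrFun (congrFun hA i) i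
    simpa [Matrix.mul_apply, Matrix.one_apply, Matrix.transpose_apply] using this
  have hex : ∃ j, A i j ≠ 0 := by
    by_contra h
    push_neg at h
    simp only [h, mul_zero, Finset.sum_const_zero] at h1
    exact one_ne_zero h1.symm
  obtain ⟨j, hj⟩ := hex
  have hsplit : A i j * A i j + ∑ j' ∈ Finset.univ.erase j, A i j' * A i j' = 1 := by
    rw [Finset.add_sum_erase Finset.univ (fun j' => A i j' * A i j') (Finset.mem_univ j)]
    exact h1
  have hge : 1 ≤ A i j * A i j := by
    rcases lt_or_gt_of_ne hj with h | h
    · nlinarith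
    · nlinarith
  have hrest : 0 ≤ ∑ j' ∈ Finset.univ.erase j, A i j' * A i j' :=
    Finset.sum_nonneg fun j' _ => mul_self_nonneg _
  have hsq : A i j * A i j = 1 := by omega
  have hsum0 : ∑ j' ∈ Finset.univ.erase j, A i j' * A i j' = 0 := by omega
  refine ⟨j, Int.isUnit_iff.mp (IsUnit.of_mul_eq_one _ hsq), ?_⟩
  intro j' hj'
  have hmem : j' ∈ Finset.univ.erase j := Finset.mem_erase.mpr ⟨hj', Finset.mem_univ _⟩
  have := (Finset.sum_eq_zero_iff_of_nonneg (fun j'' _ => mul_self_nonneg (A i j''))).mp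
    hsum0 j' hmem
  exact mul_self_eq_zero.mp this

lemma isOrthMat_exists {A : Matrix (Fin N) (Fin N) ℤ} (hA : IsOrthMat A) :
    ∃ (π : Equiv.Perm (Fin N)) (s : Fin N → ℤ), Signs s ∧
      ∀ (v : Fin N → ℤ) (i : Fin N), A.mulVec v i = s i * v (π i) := by
  choose j hj1 hj2 using isOrthMat_row hA
  have hinj : Function.Injective j := by
    intro i i' h
    by_contra hne
    have h0 : (A * A.transpose) i i' = 0 := by
      rw [hA]; exact Matrix.one_apply_ne hne
    rw [Matrix.mul_apply] at h0
    have hsum : ∑ j', A i j' * A.transpose j' i' = A i (j i) * A i' (j i) := by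
      refine Finset.sum_eq_single (j i) ?_ (by simp)
      intro j' _ hj'
      rw [hj2 i j' hj', zero_mul]
    rw [hsum] at h0
    have h1 := hj1 i
    have h2 := hj1 i'
    rw [← h] at h2
    rcases h1 with h1 | h1 <;> rcases h2 with h2 | h2 <;> rw [h1, h2] at h0 <;> omega
  have hbij : Function.Bijective j := Finite.injective_iff_bijective.mp hinj
  refine ⟨Equiv.ofBijective j hbij, fun i => A i (j i), hj1, ?_⟩
  intro v i
  rw [Matrix.mulVec]
  show ∑ j', A i j' * v j' = _
  refine Finset.sum_eq_single (j i) ?_ (by simp)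
  · intro j' _ hj'
    rw [hj2 i j' hj', zero_mul]

/-- signed permutation matrix -/
def spMat (π : Equiv.Perm (Fin N)) (s : Fin N → ℤ) : Matrix (Fin N) (Fin N) ℤ :=
  Matrix.of fun i j => if j = π i then s i else 0

lemma spMat_mulVec (π : Equiv.Perm (Fin N)) (s : Fin N → ℤ) (v : Fin N → ℤ) (i : Fin N) :
    (spMat π s).mulVec v i = s i * v (π i) := by
  rw [Matrix.mulVec]
  show ∑ j', (if j' = π i then s i else 0) * v j' = _
  rw [Finset.sum_eq_single (π i) (fun j' _ h => by rw [if_neg h, zero_mul]) (by simp)]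
  rw [if_pos rfl]

lemma spMat_orth (π : Equiv.Perm (Fin N)) {s : Fin N → ℤ} (hs : Signs s) :
    IsOrthMat (spMat π s) := by
  ext i i'
  rw [Matrix.mul_apply]
  simp only [spMat, Matrix.transpose_apply, Matrix.of_apply]
  rw [Finset.sum_eq_single (π i) (fun j' _ h => by rw [if_neg h, zero_mul]) (by simp)]
  rw [if_pos rfl]
  by_cases h : i = i'
  · subst h
    rw [if_pos rfl, Matrix.one_apply_eq, hs.sq]
  · rw [if_neg (fun hc => h (π.injective hc)), mul_zero, Matrix.one_apply_ne h]

theorem isOrthantOfRank_iff {L : Set (Fin N → ℤ)} {k : ℕ} :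
    IsOrthantOfRank L k ↔ ∃ a J ε, Signs ε ∧ J.card = k ∧ L = orthSet a J ε := by
  constructor
  · rintro ⟨a, A, Y, hA, hY, rfl⟩
    obtain ⟨π, s, hs, hmv⟩ := isOrthMat_exists hA
    refine ⟨a, Y.image π.symm, s, hs, by rw [Finset.card_image_of_injective _ π.symm.injective, hY], ?_⟩
    have hmem : ∀ i, i ∈ Y.image π.symm ↔ π i ∈ Y := by
      intro i
      simp only [Finset.mem_image]
      constructor
      · rintro ⟨y, hy, rfl⟩; simpa using hy
      · intro h; exact ⟨π i, h, by simp⟩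
    ext x
    constructor
    · rintro ⟨v, ⟨hv0, hvY⟩, rfl⟩
      intro i
      constructor
      · intro hi
        simp only [Pi.add_apply, hmv]
        have : a i + s i * v (π i) - a i = s i * v (π i) := by ring
        rw [this, ← mul_assoc, hs.sq, one_mul]
        exact hv0 _
      · intro hi
        simp only [Pi.add_apply, hmv]
        rw [hvY (π i) (fun hc => hi ((hmem i).mpr hc)), mul_zero, add_zero]
    · intro hx
      refine ⟨fun j => s (π.symm j) * (x (π.symm j) - a (π.symm j)), ⟨?_, ?_⟩, ?_⟩
      · intro j
        by_cases hj : π.symm j ∈ Y.image π.symm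
        · exact (hx (π.symm j)).1 hj
        · dsimp only; rw [(hx (π.symm j)).2 hj]; simp
      · intro j hj
        have : π.symm j ∉ Y.image π.symm := by
          rw [hmem, Equiv.apply_symm_apply]; exact hj
        dsimp only; rw [(hx (π.symm j)).2 this]; simp
      · ext i
        simp only [Pi.add_apply, hmv, Equiv.symm_apply_apply]
        rw [← mul_assoc, hs.sq, one_mul]; ring
  · rintro ⟨a, J, ε, hε, hJ, rfl⟩
    refine ⟨a, spMat (Equiv.refl _) ε, J, spMat_orth _ hε, hJ, ?_⟩
    ext x
    constructor
    · intro hx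
      refine ⟨fun i => ε i * (x i - a i), ⟨?_, ?_⟩, ?_⟩
      · intro i
        by_cases hi : i ∈ J
        · exact (hx i).1 hi
        · dsimp only; rw [(hx i).2 hi]; simp
      · intro i hi
        dsimp only; rw [(hx i).2 hi]; simp
      · ext i
        simp only [Pi.add_apply, spMat_mulVec, Equiv.refl_apply]
        rw [← mul_assoc, hε.sq, one_mul]; ring
    · rintro ⟨v, ⟨hv0, hvJ⟩, rfl⟩
      intro i
      constructor
      · intro hi
        simp only [Pi.add_apply, spMat_mulVec, Equiv.refl_apply]
        have : a i + ε i * v i - a i = ε i * v i := by ring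
        rw [this, ← mul_assoc, hε.sq, one_mul]
        exact hv0 _
      · intro hi
        simp only [Pi.add_apply, spMat_mulVec, Equiv.refl_apply]
        rw [hvJ i hi, mul_zero, add_zero]


-- §2
lemma mem_update_orthSet {a : Fin N → ℤ} {J : Finset (Fin N)} {ε : Fin N → ℤ}
    (hε : Signs ε) {x : Fin N → ℤ} (hx : x ∈ orthSet a J ε) {i : Fin N} (hi : i ∈ J)
    {t : ℤ} (ht : 0 ≤ t) : Function.update x i (x i + t * ε i) ∈ orthSet a J ε := by
  intro i'
  rcases eq_or_ne i' i with h | h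
  · subst h
    refine ⟨fun _ => ?_, fun h' => absurd hi h'⟩
    rw [Function.update_self]
    have heq : ε i' * (x i' + t * ε i' - a i') = ε i' * (x i' - a i') + t * (ε i' * ε i') := by
      ring
    rw [heq, hε.sq]
    have := (hx i').1 hi
    linarith
  · rw [Function.update_of_ne h]
    exact hx i'

lemma orthSet_subset_J {a b : Fin N → ℤ} {J K : Finset (Fin N)} {ε δ : Fin N → ℤ}
    (hε : Signs ε) (hsub : orthSet a J ε ⊆ orthSet b K δ) : J ⊆ K := by
  intro i hi
  by_contra hiK
  have h1 := (hsub (base_mem_orthSet a J ε) i).2 hiK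
  have h2 := (hsub (mem_update_orthSet hε (base_mem_orthSet a J ε) hi zero_le_one) i).2 hiK
  rw [Function.update_self] at h2
  have := hε i
  omega

lemma orthSet_subset_sign {a b : Fin N → ℤ} {J K : Finset (Fin N)} {ε δ : Fin N → ℤ}
    (hε : Signs ε) (hδ : Signs δ) (hsub : orthSet a J ε ⊆ orthSet b K δ) :
    ∀ i ∈ J, δ i = ε i := by
  intro i hi
  have hiK : i ∈ K := orthSet_subset_J hε hsub hi
  by_contra hne
  have hprod : δ i * ε i = -1 := by
    rcases hε i with h | h <;> rcases hδ i with h' | h' <;> rw [h, h'] <;> omega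
  have hpt : ∀ t : ℤ, 0 ≤ t → 0 ≤ δ i * (a i - b i) - t := by
    intro t ht
    have hmem := hsub (mem_update_orthSet hε (base_mem_orthSet a J ε) hi ht)
    have h := (hmem i).1 hiK
    rw [Function.update_self] at h
    have heq : δ i * (a i + t * ε i - b i) = δ i * (a i - b i) + t * (δ i * ε i) := by ring
    rw [heq, hprod] at h
    linarith
  have h0 := hpt 0 le_rfl
  have h1 := hpt (δ i * (a i - b i) + 1) (by linarith)
  linarith

lemma orthSet_subset_off {a b : Fin N → ℤ} {J K : Finset (Fin N)} {ε δ : Fin N → ℤ}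
    (hsub : orthSet a J ε ⊆ orthSet b K δ) : ∀ i ∉ K, a i = b i := by
  intro i hi
  exact (hsub (base_mem_orthSet a J ε) i).2 hi

/-- A full-rank suborthant has the same data. -/
lemma orthSet_subset_full {a b : Fin N → ℤ} {J K : Finset (Fin N)} {ε δ : Fin N → ℤ}
    (hε : Signs ε) (hδ : Signs δ) (hcard : K.card ≤ J.card)
    (hsub : orthSet a J ε ⊆ orthSet b K δ) :
    J = K ∧ (∀ i ∈ J, δ i = ε i) ∧ (∀ i ∉ J, a i = b i) := by
  have hJK : J = K := Finset.eq_of_subset_of_card_le (orthSet_subset_J hε hsub) hcard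
  exact ⟨hJK, orthSet_subset_sign hε hδ hsub, fun i hi => orthSet_subset_off hsub i (hJK ▸ hi)⟩

lemma orthSet_congr {a : Fin N → ℤ} {J : Finset (Fin N)} {ε ε' : Fin N → ℤ}
    (h : ∀ i ∈ J, ε i = ε' i) : orthSet a J ε = orthSet a J ε' := by
  ext x
  constructor <;> intro hx i <;> refine ⟨fun hi => ?_, (hx i).2⟩
  · rw [← h i hi]; exact (hx i).1 hi
  · rw [h i hi]; exact (hx i).1 hi

lemma singleton_isOrthant (x : Fin N → ℤ) : IsOrthantOfRank {x} 0 := by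
  rw [isOrthantOfRank_iff]
  refine ⟨x, ∅, fun _ => 1, fun i => Or.inl rfl, Finset.card_empty, ?_⟩
  ext y
  simp only [Set.mem_singleton_iff, orthSet, Set.mem_setOf_eq]
  constructor
  · rintro rfl i
    exact ⟨fun h => by simp, fun _ => rfl⟩
  · intro h
    funext i
    exact (h i).2 (Finset.notMem_empty i)

lemma rank_le_N {L : Set (Fin N → ℤ)} {k : ℕ} (h : IsOrthantOfRank L k) : k ≤ N := by
  rw [isOrthantOfRank_iff] at h
  obtain ⟨a, J, ε, _, hJ, _⟩ := h
  rw [← hJ]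
  simpa using Finset.card_le_univ J

lemma rank_le_of_subset {Q L : Set (Fin N → ℤ)} {m k : ℕ}
    (hQ : IsOrthantOfRank Q m) (hL : IsOrthantOfRank L k) (hsub : Q ⊆ L) : m ≤ k := by
  rw [isOrthantOfRank_iff] at hQ hL
  obtain ⟨c, JQ, δ, hδ, hJQ, rfl⟩ := hQ
  obtain ⟨a, J, ε, hε, hJ, rfl⟩ := hL
  rw [← hJQ, ← hJ]
  exact Finset.card_le_card (orthSet_subset_J hδ hsub)

lemma orthRank_orthant {L : Set (Fin N → ℤ)} {k : ℕ} (hL : IsOrthantOfRank L k) :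
    orthRank L = k := by
  apply le_antisymm
  · exact csSup_le ⟨k, L, hL, subset_rfl⟩
      (fun m ⟨Q, hQ, hsub⟩ => rank_le_of_subset hQ hL hsub)
  · exact le_csSup ⟨k, fun m ⟨Q, hQ, hsub⟩ => rank_le_of_subset hQ hL hsub⟩ ⟨L, hL, subset_rfl⟩

lemma orthRank_between {Q X L : Set (Fin N → ℤ)} {k : ℕ}
    (hQ : IsOrthantOfRank Q k) (hL : IsOrthantOfRank L k) (h1 : Q ⊆ X) (h2 : X ⊆ L) :
    orthRank X = k := by
  apply le_antisymm
  · exact csSup_le ⟨k, Q, hQ, h1⟩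
      (fun m ⟨Q', hQ', hsub⟩ => rank_le_of_subset hQ' hL (hsub.trans h2))
  · exact le_csSup ⟨k, fun m ⟨Q', hQ', hsub⟩ => rank_le_of_subset hQ' hL (hsub.trans h2)⟩
      ⟨Q, hQ, h1⟩

lemma exists_orthant_orthRank {X : Set (Fin N → ℤ)} (hne : X.Nonempty) :
    ∃ Q, IsOrthantOfRank Q (orthRank X) ∧ Q ⊆ X := by
  obtain ⟨x, hx⟩ := hne
  have hmem : 0 ∈ {k | ∃ L, IsOrthantOfRank L k ∧ L ⊆ X} :=
    ⟨{x}, singleton_isOrthant x, Set.singleton_subset_iff.mpr hx⟩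
  have hbdd : BddAbove {k | ∃ L, IsOrthantOfRank L k ∧ L ⊆ X} :=
    ⟨N, fun m ⟨Q, hQ, _⟩ => rank_le_N hQ⟩
  exact Nat.sSup_mem ⟨0, hmem⟩ hbdd

lemma comm_refl {L : Set (Fin N → ℤ)} {k : ℕ} (hL : IsOrthantOfRank L k) :
    Commensurable L L := by
  refine ⟨?_, by rw [Set.inter_self], by rw [Set.inter_self]⟩
  rw [Set.inter_self]
  rw [isOrthantOfRank_iff] at hL
  obtain ⟨a, J, ε, _, _, rfl⟩ := hL
  exact orthSet_nonempty a J ε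

lemma comm_symm {L L' : Set (Fin N → ℤ)} (h : Commensurable L L') : Commensurable L' L := by
  obtain ⟨hne, h1, h2⟩ := h
  rw [Set.inter_comm] at hne h1 h2
  exact ⟨hne, h2, h1⟩

lemma comm_of_subset_full {Q L : Set (Fin N → ℤ)} {k : ℕ}
    (hQ : IsOrthantOfRank Q k) (hL : IsOrthantOfRank L k) (hsub : Q ⊆ L) :
    Commensurable L Q := by
  have hinter : L ∩ Q = Q := Set.inter_eq_self_of_subset_right hsub
  refine ⟨?_, ?_, ?_⟩
  · rw [hinter]
    rw [isOrthantOfRank_iff] at hQ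
    obtain ⟨a, J, ε, _, _, rfl⟩ := hQ
    exact orthSet_nonempty a J ε
  · rw [hinter, orthRank_orthant hQ, orthRank_orthant hL]
  · rw [hinter]

/-- Two orthants with the same data are commensurable. -/
lemma comm_of_data {a b : Fin N → ℤ} {J : Finset (Fin N)} {ε : Fin N → ℤ}
    (hε : Signs ε) (hab : ∀ i ∉ J, a i = b i) :
    Commensurable (orthSet a J ε) (orthSet b J ε) := by
  classical
  set c : Fin N → ℤ := fun i => if i ∈ J then (if 0 ≤ ε i * (b i - a i) then b i else a i)
    else a i with hc
  have hsubA : orthSet c J ε ⊆ orthSet a J ε := by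
    intro x hx i
    refine ⟨fun hi => ?_, fun hi => ?_⟩
    · have h1 := (hx i).1 hi
      have hci : c i = if 0 ≤ ε i * (b i - a i) then b i else a i := by rw [hc]; simp [hi]
      by_cases h : 0 ≤ ε i * (b i - a i)
      · rw [if_pos h] at hci
        rw [hci] at h1
        have hid : ε i * (x i - a i) = ε i * (x i - b i) + ε i * (b i - a i) := by ring
        linarith
      · rw [if_neg h] at hci
        rw [hci] at h1
        exact h1
    · have := (hx i).2 hi
      rw [this, hc]; simp [hi]
  have hsubB : orthSet c J ε ⊆ orthSet b J ε := by
    intro x hx i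
    refine ⟨fun hi => ?_, fun hi => ?_⟩
    · have h1 := (hx i).1 hi
      have hci : c i = if 0 ≤ ε i * (b i - a i) then b i else a i := by rw [hc]; simp [hi]
      by_cases h : 0 ≤ ε i * (b i - a i)
      · rw [if_pos h] at hci
        rw [hci] at h1
        exact h1
      · rw [if_neg h] at hci
        rw [hci] at h1
        push_neg at h
        have hid : ε i * (x i - b i) = ε i * (x i - a i) - (ε i * (b i - a i)) := by ring
        linarith
    · have := (hx i).2 hi
      rw [this, hc]
      simp only [if_neg hi]
      exact hab i hi
  have hQ : IsOrthantOfRank (orthSet c J ε) J.card :=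
    isOrthantOfRank_iff.mpr ⟨c, J, ε, hε, rfl, rfl⟩
  have hL : IsOrthantOfRank (orthSet a J ε) J.card :=
    isOrthantOfRank_iff.mpr ⟨a, J, ε, hε, rfl, rfl⟩
  have hL' : IsOrthantOfRank (orthSet b J ε) J.card :=
    isOrthantOfRank_iff.mpr ⟨b, J, ε, hε, rfl, rfl⟩
  have hsubI : orthSet c J ε ⊆ orthSet a J ε ∩ orthSet b J ε :=
    Set.subset_inter hsubA hsubB
  refine ⟨⟨c, hsubI (base_mem_orthSet c J ε)⟩, ?_, ?_⟩
  · rw [orthRank_orthant hL, orthRank_between hQ hL hsubI Set.inter_subset_left]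
  · rw [orthRank_orthant hL', orthRank_between hQ hL hsubI Set.inter_subset_left]

/-- Extract equality of data from commensurability of equal-rank orthants. -/
lemma comm_data_extract {a a' : Fin N → ℤ} {J J' : Finset (Fin N)} {ε ε' : Fin N → ℤ}
    (hε : Signs ε) (hε' : Signs ε') (hcard : J'.card = J.card)
    (hcomm : Commensurable (orthSet a J ε) (orthSet a' J' ε')) :
    J = J' ∧ (∀ i ∈ J, ε' i = ε i) ∧ (∀ i ∉ J, a i = a' i) := by
  obtain ⟨hne, h1, h2⟩ := hcomm
  have hL : IsOrthantOfRank (orthSet a J ε) J.card :=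
    isOrthantOfRank_iff.mpr ⟨a, J, ε, hε, rfl, rfl⟩
  have hL' : IsOrthantOfRank (orthSet a' J' ε') J.card :=
    isOrthantOfRank_iff.mpr ⟨a', J', ε', hε', hcard, rfl⟩
  rw [orthRank_orthant hL] at h1
  obtain ⟨Q, hQrk, hQsub⟩ := exists_orthant_orthRank hne
  rw [← h1] at hQrk
  obtain ⟨cq, JQ, δ, hδ, hJQ, rfl⟩ := isOrthantOfRank_iff.mp hQrk
  have hf1 := orthSet_subset_full hδ hε (le_of_eq hJQ.symm)
    (hQsub.trans Set.inter_subset_left)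
  have hf2 := orthSet_subset_full hδ hε' (le_of_eq (hcard.trans hJQ.symm))
    (hQsub.trans Set.inter_subset_right)
  obtain ⟨hJ1, hs1, ho1⟩ := hf1
  obtain ⟨hJ2, hs2, ho2⟩ := hf2
  refine ⟨hJ1 ▸ hJ2, ?_, ?_⟩
  · intro i hi
    rw [← hJ1] at hi
    rw [hs1 i hi, hs2 i hi]
  · intro i hi
    rw [← hJ1] at hi
    rw [← ho1 i hi, ← ho2 i hi]

lemma comm_trans_rank {L M L' : Set (Fin N → ℤ)} {k : ℕ}
    (hL : IsOrthantOfRank L k) (hM : IsOrthantOfRank M k) (hL' : IsOrthantOfRank L' k)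
    (h1 : Commensurable L M) (h2 : Commensurable M L') : Commensurable L L' := by
  obtain ⟨aL, JL, εL, hεL, hJL, rfl⟩ := isOrthantOfRank_iff.mp hL
  obtain ⟨aM, JM, εM, hεM, hJM, rfl⟩ := isOrthantOfRank_iff.mp hM
  obtain ⟨aP, JP, εP, hεP, hJP, rfl⟩ := isOrthantOfRank_iff.mp hL'
  obtain ⟨hJ1, hs1, ho1⟩ := comm_data_extract hεL hεM (hJM.trans hJL.symm) h1
  obtain ⟨hJ2, hs2, ho2⟩ := comm_data_extract hεM hεP (hJP.trans hJM.symm) h2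
  subst hJ1
  subst hJ2
  have hcongr : orthSet aP JL εP = orthSet aP JL εL := by
    apply orthSet_congr
    intro i hi
    rw [hs2 i hi, hs1 i hi]
  rw [hcongr]
  exact comm_of_data hεL (fun i hi => (ho1 i hi).trans (ho2 i hi))

end Aux

section Aux3
variable {N : ℕ} {S : Set (Fin N → ℤ)} {k : ℕ}

lemma orthant_nonempty {L : Set (Fin N → ℤ)} {k : ℕ} (h : IsOrthantOfRank L k) : L.Nonempty := by
  obtain ⟨a, J, ε, _, _, rfl⟩ := isOrthantOfRank_iff.mp h
  exact orthSet_nonempty a J ε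

lemma image_orthant {L : Set (Fin N → ℤ)} {k : ℕ} (hL : IsOrthantOfRank L k)
    {f : (Fin N → ℤ) → (Fin N → ℤ)} {c : Fin N → ℤ} {A : Matrix (Fin N) (Fin N) ℤ}
    (hA : IsOrthMat A) (hf : ∀ x ∈ L, f x = c + A.mulVec x) :
    IsOrthantOfRank (f '' L) k := by
  obtain ⟨a, B, Y, hB, hY, rfl⟩ := hL
  refine ⟨c + A.mulVec a, A * B, Y, ?_, hY, ?_⟩
  · unfold IsOrthMat at *
    rw [Matrix.transpose_mul, ← Matrix.mul_assoc, Matrix.mul_assoc A B, hB, Matrix.mul_one, hA]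
  · rw [Set.image_image]
    apply Set.image_congr
    intro v hv
    rw [hf _ ⟨v, hv, rfl⟩]
    dsimp only
    rw [Matrix.mulVec_add, Matrix.mulVec_mulVec, add_assoc]

lemma comm_extract {C D : Set (Fin N → ℤ)} {k : ℕ} (hC : IsOrthantOfRank C k)
    (h : Commensurable C D) : ∃ Q, IsOrthantOfRank Q k ∧ Q ⊆ C ∩ D := by
  obtain ⟨hne, h1, _⟩ := h
  obtain ⟨Q, hQ, hQsub⟩ := exists_orthant_orthRank hne
  rw [← h1, orthRank_orthant hC] at hQ
  exact ⟨Q, hQ, hQsub⟩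

lemma comm_of_orthant_subset_inter {Q C D : Set (Fin N → ℤ)} {k : ℕ}
    (hQ : IsOrthantOfRank Q k) (hC : IsOrthantOfRank C k) (hD : IsOrthantOfRank D k)
    (hsub : Q ⊆ C ∩ D) : Commensurable C D := by
  refine ⟨(orthant_nonempty hQ).mono hsub, ?_, ?_⟩
  · rw [orthRank_orthant hC,
      orthRank_between hQ hC hsub Set.inter_subset_left]
  · rw [orthRank_orthant hD,
      orthRank_between hQ hC hsub Set.inter_subset_left]

lemma germRel_equivalence (S : Set (Fin N → ℤ)) (k : ℕ) :
    Equivalence (fun L L' : germSet S k => Commensurable L.1 L'.1) :=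
  ⟨fun L => comm_refl L.2.1, fun {x y} h => comm_symm h,
    fun {x y z} h1 h2 => comm_trans_rank x.2.1 y.2.1 z.2.1 h1 h2⟩

lemma germOf_eq_iff {L L' : germSet S k} :
    germOf S k L = germOf S k L' ↔ Commensurable L.1 L'.1 := by
  rw [germOf, germOf]; refine Quot.eq.trans ?_
  exact (germRel_equivalence S k).eqvGen_iff

lemma perm_image_eq {S : Set (Fin N → ℤ)} {g : Equiv.Perm (Fin N → ℤ)}
    (hg : ∀ x ∉ S, g x = x) : ⇑g '' S = S := by
  apply Set.eq_of_subset_of_subset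
  · rintro _ ⟨x, hx, rfl⟩
    by_contra h
    have h1 := hg _ h
    have h2 : g x = x := g.injective h1
    rw [h2] at h; exact h hx
  · intro x hx
    refine ⟨g.symm x, ?_, g.apply_symm_apply x⟩
    by_contra h
    have h1 := hg _ h
    rw [g.apply_symm_apply] at h1
    exact h (h1 ▸ hx)

def deepPoint (a : Fin N → ℤ) (J : Finset (Fin N)) (ε : Fin N → ℤ) (t : ℤ) : Fin N → ℤ :=
  fun i => if i ∈ J then a i + t * ε i else a i

lemma deepPoint_off {a : Fin N → ℤ} {J : Finset (Fin N)} {ε : Fin N → ℤ} {t : ℤ}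
    {i : Fin N} (hi : i ∉ J) : deepPoint a J ε t i = a i := by
  simp [deepPoint, hi]

lemma deepPoint_on {a : Fin N → ℤ} {J : Finset (Fin N)} {ε : Fin N → ℤ} {t : ℤ}
    {i : Fin N} (hi : i ∈ J) : deepPoint a J ε t i = a i + t * ε i := by
  simp [deepPoint, hi]

lemma deepPoint_mem {a : Fin N → ℤ} {J : Finset (Fin N)} {ε : Fin N → ℤ}
    (hε : Signs ε) {t : ℤ} (ht : 0 ≤ t) : deepPoint a J ε t ∈ orthSet a J ε := by
  intro i
  refine ⟨fun hi => ?_, fun hi => deepPoint_off hi⟩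
  rw [deepPoint_on hi]
  have : ε i * (a i + t * ε i - a i) = t * (ε i * ε i) := by ring
  rw [this, hε.sq]
  simpa using ht

lemma deep_subset {a : Fin N → ℤ} {J : Finset (Fin N)} {ε : Fin N → ℤ}
    (hε : Signs ε) {t : ℤ} (ht : 0 ≤ t) :
    orthSet (deepPoint a J ε t) J ε ⊆ orthSet a J ε := by
  intro x hx i
  refine ⟨fun hi => ?_, fun hi => ?_⟩
  · have h1 := (hx i).1 hi
    rw [deepPoint_on hi] at h1
    have hid : ε i * (x i - a i) = ε i * (x i - (a i + t * ε i)) + t * (ε i * ε i) := by ring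
    rw [hid, hε.sq]
    linarith
  · rw [(hx i).2 hi, deepPoint_off hi]

lemma deep_mono {a : Fin N → ℤ} {J : Finset (Fin N)} {ε : Fin N → ℤ}
    (hε : Signs ε) {t t' : ℤ} (h : t ≤ t') :
    orthSet (deepPoint a J ε t') J ε ⊆ orthSet (deepPoint a J ε t) J ε := by
  intro x hx i
  refine ⟨fun hi => ?_, fun hi => ?_⟩
  · have h1 := (hx i).1 hi
    rw [deepPoint_on hi] at h1
    rw [deepPoint_on hi]
    have hid : ε i * (x i - (a i + t * ε i)) =
        ε i * (x i - (a i + t' * ε i)) + (t' - t) * (ε i * ε i) := by ring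
    rw [hid, hε.sq]
    linarith
  · rw [(hx i).2 hi, deepPoint_off hi, deepPoint_off hi]

/-- A good representative for computing the germ image. -/
def GoodRep (f : (Fin N → ℤ) → (Fin N → ℤ)) (S : Set (Fin N → ℤ)) (k : ℕ)
    (L C : Set (Fin N → ℤ)) : Prop :=
  IsOrthantOfRank C k ∧ Commensurable L C ∧ IsometricOn f C ∧ (f '' C ∈ germSet S k)

lemma germStep {g : Equiv.Perm (Fin N → ℤ)} (hg : IsPeiPerm S g) {L : Set (Fin N → ℤ)}
    (hL : IsOrthantOfRank L k) (hLS : L ⊆ S) :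
    ∃ C, C ⊆ L ∧ GoodRep (⇑g) S k L C := by
  obtain ⟨⟨𝓛, h𝓛fin, h𝓛orth, hS𝓛, _, h𝓛iso⟩, hfix⟩ := hg
  obtain ⟨a, J, ε, hε, hJ, rfl⟩ := isOrthantOfRank_iff.mp hL
  have hmemS : ∀ t : ℕ, deepPoint a J ε t ∈ ⋃₀ 𝓛 := fun t => by
    rw [← hS𝓛]
    exact hLS (deepPoint_mem hε (by positivity))
  have hpig : ∃ P ∈ 𝓛, {t : ℕ | deepPoint a J ε t ∈ P}.Infinite := by
    by_contra h
    push_neg at h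
    have hsub : (Set.univ : Set ℕ) ⊆ ⋃ P ∈ 𝓛, {t : ℕ | deepPoint a J ε t ∈ P} := by
      intro t _
      obtain ⟨P, hP, hmem⟩ := hmemS t
      exact Set.mem_biUnion hP hmem
    have hfin : (⋃ P ∈ 𝓛, {t : ℕ | deepPoint a J ε t ∈ P}).Finite :=
      Set.Finite.biUnion h𝓛fin (fun P hP => h P hP)
    exact Set.infinite_univ (hfin.subset hsub)
  obtain ⟨P, hP, hT⟩ := hpig
  obtain ⟨m, hm⟩ := h𝓛orth P hP
  obtain ⟨b, K, δ, hδ, hK, hPeq⟩ := isOrthantOfRank_iff.mp hm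
  have hTmem : ∀ t ∈ {t : ℕ | deepPoint a J ε t ∈ P}, deepPoint a J ε t ∈ orthSet b K δ :=
    fun t ht => hPeq ▸ ht
  have hclaim : ∀ i ∈ J, i ∈ K ∧ δ i = ε i := by
    intro i hi
    have hK' : i ∈ K := by
      by_contra hiK
      obtain ⟨t₁, ht₁, t₂, ht₂, hne⟩ := hT.nontrivial
      have e₁ := (hTmem t₁ ht₁ i).2 hiK
      have e₂ := (hTmem t₂ ht₂ i).2 hiK
      rw [deepPoint_on hi] at e₁ e₂
      rcases hε i with h | h <;> rw [h] at e₁ e₂ <;>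
        [skip; skip] <;> omega
    refine ⟨hK', ?_⟩
    by_contra hne
    have hprod : δ i * ε i = -1 := by
      rcases hε i with h | h <;> rcases hδ i with h' | h' <;> rw [h, h'] <;> omega
    obtain ⟨t, ht, hgt⟩ := hT.exists_gt (δ i * (a i - b i)).toNat
    have h1 := (hTmem t ht i).1 hK'
    rw [deepPoint_on hi] at h1
    have hid : δ i * (a i + (t : ℤ) * ε i - b i) = δ i * (a i - b i) + t * (δ i * ε i) := by
      ring
    rw [hid, hprod] at h1
    have := Int.self_le_toNat (δ i * (a i - b i))
    omega
  obtain ⟨t₀, ht₀⟩ := hT.nonempty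
  have hdpP : deepPoint a J ε t₀ ∈ orthSet b K δ := hTmem t₀ ht₀
  set C := orthSet (deepPoint a J ε (t₀ : ℤ)) J ε with hCdef
  have hCL : C ⊆ orthSet a J ε := deep_subset hε (by positivity)
  have hCP : C ⊆ P := by
    rw [hPeq]
    intro y hy i
    refine ⟨fun hiK => ?_, fun hiK => ?_⟩
    · by_cases hiJ : i ∈ J
      · have h1 := (hy i).1 hiJ
        have h2 := (hdpP i).1 hiK
        have hδε := (hclaim i hiJ).2
        have hid : δ i * (y i - b i) =
            ε i * (y i - deepPoint a J ε t₀ i) + δ i * (deepPoint a J ε t₀ i - b i) := by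
          rw [hδε]; ring
        rw [hid]; linarith
      · rw [(hy i).2 hiJ]
        exact (hdpP i).1 hiK
    · have hiJ : i ∉ J := fun h => hiK (hclaim i h).1
      rw [(hy i).2 hiJ]
      exact (hdpP i).2 hiK
  have hCrank : IsOrthantOfRank C k := isOrthantOfRank_iff.mpr
    ⟨deepPoint a J ε t₀, J, ε, hε, hJ, rfl⟩
  have hLrank : IsOrthantOfRank (orthSet a J ε) k := isOrthantOfRank_iff.mpr
    ⟨a, J, ε, hε, hJ, rfl⟩
  have hcomm : Commensurable (orthSet a J ε) C :=
    comm_of_data hε (fun i hi => (deepPoint_off hi).symm)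
  obtain ⟨c0, A, hA, hform⟩ := h𝓛iso P hP
  have hiso : IsometricOn (⇑g) C := ⟨c0, A, hA, fun x hx => hform x (hCP hx)⟩
  refine ⟨C, hCL, hCrank, hcomm, hiso, ?_, ?_⟩
  · exact image_orthant hCrank hA (fun x hx => hform x (hCP hx))
  · rw [← perm_image_eq hfix]
    exact Set.image_mono (hCL.trans hLS)

lemma goodRep_image_comm {g : Equiv.Perm (Fin N → ℤ)} {L M C D : Set (Fin N → ℤ)}
    (hLr : IsOrthantOfRank L k) (hMr : IsOrthantOfRank M k) (hLM : Commensurable L M)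
    (hC : GoodRep (⇑g) S k L C) (hD : GoodRep (⇑g) S k M D) :
    Commensurable (⇑g '' C) (⇑g '' D) := by
  obtain ⟨hCr, hLC, ⟨c1, A1, hA1, hf1⟩, hCim⟩ := hC
  obtain ⟨hDr, hMD, _, hDim⟩ := hD
  have hCD : Commensurable C D :=
    comm_trans_rank hCr hMr hDr
      (comm_trans_rank hCr hLr hMr (comm_symm hLC) hLM) hMD
  obtain ⟨Q, hQr, hQsub⟩ := comm_extract hCr hCD
  have hQC : Q ⊆ C := hQsub.trans Set.inter_subset_left
  have hQD : Q ⊆ D := hQsub.trans Set.inter_subset_right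
  have hgQ : IsOrthantOfRank (⇑g '' Q) k :=
    image_orthant hQr hA1 (fun x hx => hf1 x (hQC hx))
  exact comm_of_orthant_subset_inter hgQ hCim.1 hDim.1
    (Set.subset_inter (Set.image_mono hQC) (Set.image_mono hQD))

noncomputable def germMap (g : Equiv.Perm (Fin N → ℤ)) (hg : IsPeiPerm S g) :
    Germ S k → Germ S k :=
  Quot.lift
    (fun L : germSet S k =>
      germOf S k ⟨⇑g '' Classical.choose (germStep hg L.2.1 L.2.2),
        (Classical.choose_spec (germStep hg L.2.1 L.2.2)).2.2.2.2⟩)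
    (fun L L' h =>
      Quot.sound (goodRep_image_comm L.2.1 L'.2.1 h
        (Classical.choose_spec (germStep hg L.2.1 L.2.2)).2
        (Classical.choose_spec (germStep hg L'.2.1 L'.2.2)).2))

lemma germMap_eq {g : Equiv.Perm (Fin N → ℤ)} (hg : IsPeiPerm S g) (L : germSet S k)
    {C : Set (Fin N → ℤ)} (hC : GoodRep (⇑g) S k L.1 C) :
    germMap g hg (germOf S k L) = germOf S k ⟨⇑g '' C, hC.2.2.2⟩ :=
  Quot.sound (goodRep_image_comm L.2.1 L.2.1 (comm_refl L.2.1)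
    (Classical.choose_spec (germStep hg L.2.1 L.2.2)).2 hC)

end Aux3


section Aux4
variable {N : ℕ} {S : Set (Fin N → ℤ)} {k : ℕ}

lemma isOrthMat_one : IsOrthMat (1 : Matrix (Fin N) (Fin N) ℤ) := by
  unfold IsOrthMat
  rw [Matrix.transpose_one, Matrix.mul_one]

lemma isometricOn_of_fixed {f : (Fin N → ℤ) → (Fin N → ℤ)} {C : Set (Fin N → ℤ)}
    (hf : ∀ x ∈ C, f x = x) : IsometricOn f C := by
  refine ⟨0, 1, isOrthMat_one, fun x hx => ?_⟩
  rw [Matrix.one_mulVec, zero_add]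
  exact hf x hx

lemma goodRep_of_fixed {g : Equiv.Perm (Fin N → ℤ)} {L C : Set (Fin N → ℤ)}
    (hCr : IsOrthantOfRank C k) (hcomm : Commensurable L C) (hCS : C ⊆ S)
    (hfix : ∀ x ∈ C, g x = x) : GoodRep (⇑g) S k L C := by
  have himg : ⇑g '' C = C := by
    rw [Set.image_congr hfix]; exact Set.image_id C
  exact ⟨hCr, hcomm, isometricOn_of_fixed hfix, by rw [himg]; exact ⟨hCr, hCS⟩⟩

lemma germMap_mul {g h : Equiv.Perm (Fin N → ℤ)} (hg : IsPeiPerm S g) (hh : IsPeiPerm S h)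
    (hgh : IsPeiPerm S (g * h)) (γ : Germ S k) :
    germMap (g * h) hgh γ = germMap g hg (germMap h hh γ) := by
  induction γ using Quot.ind with
  | _ L =>
  have s₁ := Classical.choose_spec (germStep hgh L.2.1 L.2.2)
  set C₁ := Classical.choose (germStep hgh L.2.1 L.2.2) with hC₁def
  have s₂ := Classical.choose_spec (germStep hh L.2.1 L.2.2)
  set C₂ := Classical.choose (germStep hh L.2.1 L.2.2) with hC₂def
  set M : germSet S k := ⟨⇑h '' C₂, s₂.2.2.2.2⟩ with hMdef
  have s₃ := Classical.choose_spec (germStep hg M.2.1 M.2.2)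
  set C₃ := Classical.choose (germStep hg M.2.1 M.2.2) with hC₃def
  show germOf S k ⟨⇑(g * h) '' C₁, s₁.2.2.2.2⟩ = germOf S k ⟨⇑g '' C₃, s₃.2.2.2.2⟩
  apply germOf_eq_iff.mpr
  obtain ⟨hC₁r, hLC₁, ⟨c1, A1, hA1, hf1⟩, hC₁im⟩ := s₁.2
  obtain ⟨hC₂r, hLC₂, ⟨c2, A2, hA2, hf2⟩, hC₂im⟩ := s₂.2
  obtain ⟨hC₃r, hMC₃, ⟨c3, A3, hA3, hf3⟩, hC₃im⟩ := s₃.2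
  have hC₁C₂ : Commensurable C₁ C₂ :=
    comm_trans_rank hC₁r L.2.1 hC₂r (comm_symm hLC₁) hLC₂
  obtain ⟨Q, hQr, hQs⟩ := comm_extract hC₁r hC₁C₂
  have hQC₁ : Q ⊆ C₁ := hQs.trans Set.inter_subset_left
  have hQC₂ : Q ⊆ C₂ := hQs.trans Set.inter_subset_right
  have hhQ : IsOrthantOfRank (⇑h '' Q) k :=
    image_orthant hQr hA2 (fun x hx => hf2 x (hQC₂ hx))
  have hcomm1 : Commensurable (⇑h '' C₂) (⇑h '' Q) :=
    comm_of_subset_full hhQ hC₂im.1 (Set.image_mono hQC₂)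
  have hcomm2 : Commensurable (⇑h '' Q) C₃ :=
    comm_trans_rank hhQ hC₂im.1 hC₃r (comm_symm hcomm1) hMC₃
  obtain ⟨R, hRr, hRs⟩ := comm_extract hhQ hcomm2
  have hRQ : R ⊆ ⇑h '' Q := hRs.trans Set.inter_subset_left
  have hRC₃ : R ⊆ C₃ := hRs.trans Set.inter_subset_right
  have hgR : IsOrthantOfRank (⇑g '' R) k :=
    image_orthant hRr hA3 (fun x hx => hf3 x (hRC₃ hx))
  have hsub1 : ⇑g '' R ⊆ ⇑(g * h) '' C₁ := by
    calc ⇑g '' R ⊆ ⇑g '' (⇑h '' Q) := Set.image_mono hRQ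
    _ = ⇑(g * h) '' Q := by rw [Equiv.Perm.coe_mul, Set.image_comp]
    _ ⊆ ⇑(g * h) '' C₁ := Set.image_mono hQC₁
  have hsub2 : ⇑g '' R ⊆ ⇑g '' C₃ := Set.image_mono hRC₃
  exact comm_of_orthant_subset_inter hgR hC₁im.1 hC₃im.1 (Set.subset_inter hsub1 hsub2)

lemma germMap_one' {g : Equiv.Perm (Fin N → ℤ)} (hg : IsPeiPerm S g) (hid : g = 1)
    (γ : Germ S k) : germMap g hg γ = γ := by
  subst hid
  induction γ using Quot.ind with
  | _ L =>
  have hrep : GoodRep (⇑(1 : Equiv.Perm (Fin N → ℤ))) S k L.1 L.1 :=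
    goodRep_of_fixed L.2.1 (comm_refl L.2.1) L.2.2 (fun x _ => rfl)
  have h1 := germMap_eq hg L hrep
  have h2 : germOf S k ⟨⇑(1 : Equiv.Perm (Fin N → ℤ)) '' L.1, hrep.2.2.2⟩ = germOf S k L := by
    apply germOf_eq_iff.mpr
    have himg : ⇑(1 : Equiv.Perm (Fin N → ℤ)) '' L.1 = L.1 := by
      have : ⇑(1 : Equiv.Perm (Fin N → ℤ)) '' L.1 = id '' L.1 := rfl
      rw [this, Set.image_id]
    show Commensurable (⇑(1 : Equiv.Perm (Fin N → ℤ)) '' L.1) L.1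
    rw [himg]
    exact comm_refl L.2.1
  exact h1.trans h2

lemma germMap_inverse {g h : Equiv.Perm (Fin N → ℤ)} (hg : IsPeiPerm S g)
    (hh : IsPeiPerm S h) (hgh : IsPeiPerm S (g * h)) (hid : g * h = 1) (γ : Germ S k) :
    germMap g hg (germMap h hh γ) = γ := by
  have h2 := germMap_mul hg hh hgh γ
  rw [← h2]
  exact germMap_one' hgh hid γ

end Aux4


section Aux5
variable {N : ℕ} {S : Set (Fin N → ℤ)} {k : ℕ}

lemma orthSet_eq_data {a b : Fin N → ℤ} {J K : Finset (Fin N)} {ε δ : Fin N → ℤ}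
    (hε : Signs ε) (hδ : Signs δ) (h : orthSet a J ε = orthSet b K δ) :
    J = K ∧ (∀ i ∈ J, δ i = ε i) ∧ (∀ i ∉ J, a i = b i) := by
  have hJK : J = K :=
    Finset.Subset.antisymm (orthSet_subset_J hε h.le) (orthSet_subset_J hδ h.ge)
  refine ⟨hJK, orthSet_subset_sign hε hδ h.le, fun i hi => orthSet_subset_off h.le i ?_⟩
  rw [← hJK]; exact hi

/-- `L` and `Q` are parallel equal-rank orthants pointing the same way with the same
off-coordinates. -/
def DataEq (L Q : Set (Fin N → ℤ)) (k : ℕ) : Prop :=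
  ∃ a J ε b δ, Signs ε ∧ Signs δ ∧ J.card = k ∧ L = orthSet a J ε ∧ Q = orthSet b J δ ∧
    (∀ i ∈ J, δ i = ε i) ∧ (∀ i ∉ J, a i = b i)

lemma comm_of_dataEq {L Q : Set (Fin N → ℤ)} (h : DataEq L Q k) : Commensurable L Q := by
  obtain ⟨a, J, ε, b, δ, hε, hδ, hJ, rfl, rfl, hs, ho⟩ := h
  rw [orthSet_congr hs]
  exact comm_of_data hε ho

lemma dataEq_unique {L₁ L₂ Q : Set (Fin N → ℤ)} (h₁ : DataEq L₁ Q k) (h₂ : DataEq L₂ Q k) :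
    Commensurable L₁ L₂ := by
  obtain ⟨a₁, J₁, ε₁, b₁, δ₁, hε₁, hδ₁, hJ₁, rfl, hQ₁, hs₁, ho₁⟩ := h₁
  obtain ⟨a₂, J₂, ε₂, b₂, δ₂, hε₂, hδ₂, hJ₂, rfl, hQ₂, hs₂, ho₂⟩ := h₂
  obtain ⟨hJ, hss, hoo⟩ := orthSet_eq_data hδ₁ hδ₂ (hQ₁.symm.trans hQ₂)
  subst hJ
  have hcongr : orthSet a₂ J₁ ε₂ = orthSet a₂ J₁ ε₁ := by
    apply orthSet_congr
    intro i hi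
    rw [← hs₂ i hi, hss i hi]
    exact hs₁ i hi
  rw [hcongr]
  apply comm_of_data hε₁
  intro i hi
  rw [ho₁ i hi, hoo i hi, ← ho₂ i hi]

lemma escape_data {a b : Fin N → ℤ} {J K : Finset (Fin N)} {ε δ : Fin N → ℤ}
    (hε : Signs ε) (hδ : Signs δ) (hcard : K.card ≤ J.card)
    (h : ∀ t : ℕ, (orthSet (deepPoint a J ε t) J ε ∩ orthSet b K δ).Nonempty) :
    J = K ∧ (∀ i ∈ J, δ i = ε i) ∧ (∀ i ∉ J, a i = b i) := by
  have hJK : J ⊆ K := by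
    intro i hi
    by_contra hiK
    set t : ℕ := (ε i * (b i - a i)).toNat + 1 with ht
    obtain ⟨y, hy1, hy2⟩ := h t
    have h1 := (hy1 i).1 hi
    rw [deepPoint_on hi] at h1
    have hid : ε i * (y i - (a i + (t : ℤ) * ε i)) =
        ε i * (y i - a i) - (t : ℤ) * (ε i * ε i) := by ring
    rw [hid, hε.sq] at h1
    have h2 := (hy2 i).2 hiK
    have h3 : ε i * (b i - a i) = ε i * (y i - a i) := by rw [h2]
    omega
  have hJKeq : J = K := Finset.eq_of_subset_of_card_le hJK hcard
  subst hJKeq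
  refine ⟨rfl, ?_, ?_⟩
  · intro i hi
    by_contra hne
    set t : ℕ := (δ i * (a i - b i)).toNat + 1 with ht
    obtain ⟨y, hy1, hy2⟩ := h t
    have h1 := (hy1 i).1 hi
    rw [deepPoint_on hi] at h1
    have hid : ε i * (y i - (a i + (t : ℤ) * ε i)) =
        ε i * (y i - a i) - (t : ℤ) * (ε i * ε i) := by ring
    rw [hid, hε.sq] at h1
    have h2 := (hy2 i).1 hi
    rcases hε i with e | e <;> rcases hδ i with d | d
    · exact hne (d.trans e.symm)
    · rw [e] at h1
      rw [d] at h2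
      rw [d] at ht
      omega
    · rw [e] at h1
      rw [d] at h2
      rw [d] at ht
      omega
    · exact hne (d.trans e.symm)
  · intro i hi
    obtain ⟨y, hy1, hy2⟩ := h 0
    have h1 := (hy1 i).2 hi
    rw [deepPoint_off hi] at h1
    have h2 := (hy2 i).2 hi
    rw [← h1, h2]

lemma escape {a b : Fin N → ℤ} {J K : Finset (Fin N)} {ε δ : Fin N → ℤ}
    (hε : Signs ε) (hδ : Signs δ) (hcard : K.card ≤ J.card)
    (hne : ¬(J = K ∧ (∀ i ∈ J, δ i = ε i) ∧ (∀ i ∉ J, a i = b i))) :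
    ∃ t : ℕ, orthSet (deepPoint a J ε t) J ε ∩ orthSet b K δ = ∅ := by
  by_contra h
  push_neg at h
  exact hne (escape_data hε hδ hcard h)

lemma germMap_fixed_of_escape {g : Equiv.Perm (Fin N → ℤ)} (hg : IsPeiPerm S g)
    {T : Set (Fin N → ℤ)} (hfixT : ∀ x ∉ T, g x = x) (L : germSet S k)
    {a : Fin N → ℤ} {J : Finset (Fin N)} {ε : Fin N → ℤ}
    (hε : Signs ε) (hJ : J.card = k) (hLeq : L.1 = orthSet a J ε) (t : ℕ)
    (hdisj : orthSet (deepPoint a J ε t) J ε ∩ T = ∅) :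
    germMap g hg (germOf S k L) = germOf S k L := by
  set C := orthSet (deepPoint a J ε (t : ℤ)) J ε with hCdef
  have hCr : IsOrthantOfRank C k := isOrthantOfRank_iff.mpr
    ⟨deepPoint a J ε t, J, ε, hε, hJ, rfl⟩
  have hCL : C ⊆ L.1 := by
    rw [hLeq]
    exact deep_subset hε (by positivity)
  have hfixC : ∀ x ∈ C, g x = x := by
    intro x hx
    apply hfixT
    intro hxT
    have : x ∈ orthSet (deepPoint a J ε t) J ε ∩ T := ⟨hx, hxT⟩
    rw [hdisj] at this
    exact this
  have hcomm : Commensurable L.1 C := by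
    rw [hLeq]
    exact comm_of_data hε (fun i hi => (deepPoint_off hi).symm)
  have hrep : GoodRep (⇑g) S k L.1 C :=
    goodRep_of_fixed hCr hcomm (hCL.trans L.2.2) hfixC
  rw [germMap_eq hg L hrep]
  apply germOf_eq_iff.mpr
  show Commensurable (⇑g '' C) L.1
  have himg : ⇑g '' C = C := by
    rw [Set.image_congr hfixC]; exact Set.image_id C
  rw [himg]
  exact comm_symm hcomm

lemma moved_finite {g : Equiv.Perm (Fin N → ℤ)} (hg : IsPeiPerm S g)
    {𝓣 : Set (Set (Fin N → ℤ))} (h𝓣fin : 𝓣.Finite)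
    (h𝓣rk : ∀ Q ∈ 𝓣, ∃ m ≤ k, IsOrthantOfRank Q m)
    (hfixT : ∀ x ∉ ⋃₀ 𝓣, g x = x) :
    {γ : Germ S k | germMap g hg γ ≠ γ}.Finite := by
  classical
  have hAQ : ∀ Q ∈ 𝓣,
      ({γ : Germ S k | ∃ L : germSet S k, germOf S k L = γ ∧ DataEq L.1 Q k}).Finite := by
    intro Q _
    apply Set.Subsingleton.finite
    rintro γ₁ ⟨L₁, rfl, hd₁⟩ γ₂ ⟨L₂, rfl, hd₂⟩
    exact germOf_eq_iff.mpr (dataEq_unique hd₁ hd₂)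
  apply Set.Finite.subset (Set.Finite.biUnion h𝓣fin hAQ)
  intro γ hγ
  obtain ⟨L, rfl⟩ := Quot.exists_rep γ
  obtain ⟨a, J, ε, hε, hJ, hLeq⟩ := isOrthantOfRank_iff.mp L.2.1
  by_contra hnot
  change germOf S k L ∉ _ at hnot
  simp only [Set.mem_iUnion, Set.mem_setOf_eq, not_exists] at hnot
  have hesc : ∀ Q ∈ 𝓣, ∃ t : ℕ, orthSet (deepPoint a J ε t) J ε ∩ Q = ∅ := by
    intro Q hQ
    obtain ⟨m, hmk, hQr⟩ := h𝓣rk Q hQ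
    obtain ⟨b, K, δ, hδ, hK, hQeq⟩ := isOrthantOfRank_iff.mp hQr
    rw [hQeq]
    apply escape hε hδ (by omega)
    rintro ⟨hJK, hs, ho⟩
    exact hnot Q hQ L ⟨rfl, a, J, ε, b, δ, hε, hδ, hJ, hLeq, by rw [hQeq, hJK], hs, ho⟩
  choose tQ htQ using hesc
  set F := h𝓣fin.toFinset with hF
  set tstar : ℕ := F.sup (fun Q => if h : Q ∈ 𝓣 then tQ Q h else 0) with htstar
  have hdisj : orthSet (deepPoint a J ε tstar) J ε ∩ ⋃₀ 𝓣 = ∅ := by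
    apply Set.eq_empty_iff_forall_notMem.mpr
    rintro x ⟨hx1, Q, hQ, hx2⟩
    have hle : tQ Q hQ ≤ tstar := by
      have hQF : Q ∈ F := h𝓣fin.mem_toFinset.mpr hQ
      have h4 := Finset.le_sup (f := fun Q => if h : Q ∈ 𝓣 then tQ Q h else 0) hQF
      have h5 : (fun Q => if h : Q ∈ 𝓣 then tQ Q h else 0) Q = tQ Q hQ := by simp [hQ]
      rw [dif_pos hQ] at h4
      exact h4
    have hxin : x ∈ orthSet (deepPoint a J ε (tQ Q hQ)) J ε :=
      deep_mono hε (by exact_mod_cast hle) hx1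
    have : x ∈ orthSet (deepPoint a J ε (tQ Q hQ)) J ε ∩ Q := ⟨hxin, hx2⟩
    rw [htQ Q hQ] at this
    exact this
  exact hγ (germMap_fixed_of_escape hg hfixT L hε hJ hLeq tstar hdisj)

lemma finitary_mem_of_swaps {β : Type*} [DecidableEq β] (H : Subgroup (Equiv.Perm β))
    (hswap : ∀ a b : β, a ≠ b → Equiv.swap a b ∈ H) :
    ∀ (n : ℕ) (σ : Equiv.Perm β) (hfin : {x | σ x ≠ x}.Finite),
      hfin.toFinset.card ≤ n → σ ∈ H := by
  classical
  intro n
  induction n with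
  | zero =>
    intro σ hfin hcard
    have hempty : hfin.toFinset = ∅ := Finset.card_eq_zero.mp (Nat.le_zero.mp hcard)
    have : σ = 1 := by
      ext x
      by_contra hx
      have : x ∈ hfin.toFinset := hfin.mem_toFinset.mpr hx
      rw [hempty] at this
      exact Finset.notMem_empty x this
    rw [this]
    exact H.one_mem
  | succ n ih =>
    intro σ hfin hcard
    by_cases hid : σ = 1
    · rw [hid]; exact H.one_mem
    · obtain ⟨x, hx⟩ : ∃ x, σ x ≠ x := by
        by_contra h
        push_neg at h
        exact hid (Equiv.ext h)
      set τ := Equiv.swap x (σ x) * σ with hτ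
      have hτfix : ∀ y, σ y = y → τ y = y := by
        intro y hy
        have hyx : y ≠ x := fun h => hx (h ▸ hy)
        have hyσx : y ≠ σ x := by
          intro h
          apply hx
          apply σ.injective
          rw [← h, hy, h]
        show Equiv.swap x (σ x) (σ y) = y
        rw [hy, Equiv.swap_apply_of_ne_of_ne hyx hyσx]
      have hτx : τ x = x := by
        show Equiv.swap x (σ x) (σ x) = x
        exact Equiv.swap_apply_right x (σ x)
      have hsub : {y | τ y ≠ y} ⊆ {y | σ y ≠ y} \ {x} := by
        intro y hy
        refine ⟨fun h => hy (hτfix y h), fun h => ?_⟩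
        rw [Set.mem_singleton_iff] at h
        exact hy (h ▸ hτx)
      have hτfin : {y | τ y ≠ y}.Finite := Set.Finite.subset (hfin.diff (t := {x})) hsub
      have hcard' : hτfin.toFinset.card ≤ n := by
        have h1 : hτfin.toFinset ⊆ hfin.toFinset.erase x := by
          intro y hy
          rw [Set.Finite.mem_toFinset] at hy
          obtain ⟨hy1, hy2⟩ := hsub hy
          exact Finset.mem_erase.mpr ⟨hy2, hfin.mem_toFinset.mpr hy1⟩
        have h2 := Finset.card_le_card h1
        have h3 : x ∈ hfin.toFinset := hfin.mem_toFinset.mpr hx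
        rw [Finset.card_erase_of_mem h3] at h2
        omega
      have hστ : σ = Equiv.swap x (σ x) * τ := by
        rw [hτ, ← mul_assoc, Equiv.swap_mul_self, one_mul]
      rw [hστ]
      exact H.mul_mem (hswap x (σ x) (Ne.symm hx)) (ih τ hτfin hcard')

end Aux5


section Aux6
variable {N : ℕ}

def boxSet (lo hi : Fin N → Option ℤ) : Set (Fin N → ℤ) :=
  {x | ∀ i, (∀ l ∈ lo i, l ≤ x i) ∧ (∀ h ∈ hi i, x i ≤ h)}

def BoxProper (lo hi : Fin N → Option ℤ) : Prop := ∀ i, lo i ≠ none ∨ hi i ≠ none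

def omax (o₁ o₂ : Option ℤ) : Option ℤ :=
  match o₁, o₂ with
  | none, o => o
  | some l, none => some l
  | some l, some l' => some (max l l')

def omin (o₁ o₂ : Option ℤ) : Option ℤ :=
  match o₁, o₂ with
  | none, o => o
  | some l, none => some l
  | some l, some l' => some (min l l')

lemma omax_le {o₁ o₂ : Option ℤ} {x : ℤ} :
    (∀ l ∈ omax o₁ o₂, l ≤ x) ↔ (∀ l ∈ o₁, l ≤ x) ∧ (∀ l ∈ o₂, l ≤ x) := by
  cases o₁ <;> cases o₂ <;> simp [omax, max_le_iff]

lemma omin_ge {o₁ o₂ : Option ℤ} {x : ℤ} :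
    (∀ h ∈ omin o₁ o₂, x ≤ h) ↔ (∀ h ∈ o₁, x ≤ h) ∧ (∀ h ∈ o₂, x ≤ h) := by
  cases o₁ <;> cases o₂ <;> simp [omin, le_min_iff]

lemma omax_ne_none_left {o₁ o₂ : Option ℤ} (h : o₁ ≠ none) : omax o₁ o₂ ≠ none := by
  cases o₁ <;> cases o₂ <;> simp [omax] at *

lemma omax_ne_none_right {o₁ o₂ : Option ℤ} (h : o₂ ≠ none) : omax o₁ o₂ ≠ none := by
  cases o₁ <;> cases o₂ <;> simp [omax] at *

lemma omin_ne_none_left {o₁ o₂ : Option ℤ} (h : o₁ ≠ none) : omin o₁ o₂ ≠ none := by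
  cases o₁ <;> cases o₂ <;> simp [omin] at *

lemma omin_ne_none_right {o₁ o₂ : Option ℤ} (h : o₂ ≠ none) : omin o₁ o₂ ≠ none := by
  cases o₁ <;> cases o₂ <;> simp [omin] at *

/-- every orthant (in normal form) is a proper box -/
lemma orthSet_eq_boxSet (a : Fin N → ℤ) (J : Finset (Fin N)) (ε : Fin N → ℤ)
    (hε : Signs ε) :
    ∃ lo hi, BoxProper lo hi ∧ orthSet a J ε = boxSet lo hi := by
  classical
  refine ⟨fun i => if i ∈ J then (if ε i = 1 then some (a i) else none) else some (a i),
    fun i => if i ∈ J then (if ε i = 1 then none else some (a i)) else some (a i), ?_, ?_⟩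
  · intro i
    by_cases hi : i ∈ J
    · by_cases h1 : ε i = 1
      · left; simp [hi, h1]
      · right; simp [hi, h1]
    · left; simp [hi]
  · ext x
    constructor
    · intro hx i
      by_cases hi : i ∈ J
      · by_cases h1 : ε i = 1
        · have := (hx i).1 hi
          rw [h1, one_mul] at this
          constructor <;> intro z hz <;> simp [hi, h1] at hz
          · omega
        · have h2 : ε i = -1 := (hε i).resolve_left h1
          have := (hx i).1 hi
          rw [h2] at this
          constructor <;> intro z hz <;> simp [hi, h1] at hz
          · omega
      · have := (hx i).2 hi
        constructor <;> intro z hz <;> simp [hi] at hz <;> omega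
    · intro hx i
      refine ⟨fun hi => ?_, fun hi => ?_⟩
      · by_cases h1 : ε i = 1
        · have := (hx i).1 (a i) (by simp [hi, h1])
          rw [h1]; omega
        · have h2 : ε i = -1 := (hε i).resolve_left h1
          have := (hx i).2 (a i) (by simp [hi, h1])
          rw [h2]; omega
      · have h1 := (hx i).1 (a i) (by simp [hi])
        have h2 := (hx i).2 (a i) (by simp [hi])
        omega

/-- a partitionable set: finite disjoint union of orthants -/
def GoodFam (𝓟 : Set (Set (Fin N → ℤ))) (X : Set (Fin N → ℤ)) : Prop :=
  𝓟.Finite ∧ (∀ L ∈ 𝓟, IsOrthant L) ∧ 𝓟.PairwiseDisjoint id ∧ ⋃₀ 𝓟 = X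

lemma boxSet_goodFam (lo hi : Fin N → Option ℤ) (hp : BoxProper lo hi) :
    ∃ 𝓟, GoodFam 𝓟 (boxSet lo hi) := by
  classical
  set F : Finset (Fin N) := Finset.univ.filter (fun i => (lo i).isSome ∧ (hi i).isSome)
    with hF
  set J : Finset (Fin N) := Finset.univ.filter (fun i => ¬((lo i).isSome ∧ (hi i).isSome))
    with hJ
  have hmemF : ∀ i, i ∈ F ↔ ((lo i).isSome ∧ (hi i).isSome) := by
    intro i; simp [hF]
  have hmemJ : ∀ i, i ∈ J ↔ ¬((lo i).isSome ∧ (hi i).isSome) := by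
    intro i; simp [hJ]
  have hJF : ∀ i, i ∈ J ↔ i ∉ F := by
    intro i; rw [hmemJ i, hmemF i]
  set base : Fin N → ℤ := fun i => match lo i, hi i with
    | some l, _ => l
    | none, some h => h
    | none, none => 0 with hbase
  set ε : Fin N → ℤ := fun i => if (lo i).isSome then 1 else -1 with hε
  have hsigns : Signs ε := by
    intro i
    by_cases h : (lo i).isSome
    · left; simp [hε, h]
    · right; simp [hε, h]
  set CSet : Set (Fin N → ℤ) := {c | (∀ i ∈ F, (∀ l ∈ lo i, l ≤ c i) ∧ (∀ h ∈ hi i, c i ≤ h))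
    ∧ (∀ i ∉ F, c i = base i)} with hCSet
  have hCfin : CSet.Finite := by
    apply Set.Finite.subset (Set.Finite.pi (t := fun i =>
      if i ∈ F then {z : ℤ | (∀ l ∈ lo i, l ≤ z) ∧ (∀ h ∈ hi i, z ≤ h)} else {base i}) ?_)
    · intro c hc
      rw [Set.mem_pi]
      intro i _
      by_cases hiF : i ∈ F
      · simp only [if_pos hiF]
        exact hc.1 i hiF
      · simp only [if_neg hiF]
        exact hc.2 i hiF
    · intro i
      by_cases hiF : i ∈ F
      · simp only [if_pos hiF]
        obtain ⟨hl, hh⟩ := (hmemF i).mp hiF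
        obtain ⟨l, hl'⟩ := Option.isSome_iff_exists.mp hl
        obtain ⟨h, hh'⟩ := Option.isSome_iff_exists.mp hh
        apply Set.Finite.subset (Set.finite_Icc l h)
        intro z hz
        exact Set.mem_Icc.mpr ⟨hz.1 l (by rw [hl']; rfl), hz.2 h (by rw [hh']; rfl)⟩
      · simp only [if_neg hiF]
        exact Set.finite_singleton _
  refine ⟨(fun c => orthSet c J ε) '' CSet, Set.Finite.image _ hCfin, ?_, ?_, ?_⟩
  · rintro L ⟨c, _, rfl⟩
    exact ⟨J.card, isOrthantOfRank_iff.mpr ⟨c, J, ε, hsigns, rfl, rfl⟩⟩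
  · rintro L ⟨c, hc, rfl⟩ M ⟨c', hc', rfl⟩ hne
    rw [Function.onFun, Set.disjoint_left]
    intro x hx hx'
    apply hne
    have : c = c' := by
      funext i
      by_cases hiF : i ∈ F
      · have hiJ : i ∉ J := fun h => (hJF i).mp h hiF
        rw [← (hx i).2 hiJ, ← (hx' i).2 hiJ]
      · rw [hc.2 i hiF, hc'.2 i hiF]
    rw [this]
  · ext x
    constructor
    · rintro ⟨L, ⟨c, hc, rfl⟩, hx⟩
      intro i
      by_cases hiF : i ∈ F
      · have hiJ : i ∉ J := fun h => (hJF i).mp h hiF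
        rw [(hx i).2 hiJ]
        exact hc.1 i hiF
      · have hiJ : i ∈ J := (hJF i).mpr hiF
        have hxi := (hx i).1 hiJ
        have hbi := hc.2 i hiF
        have hnotboth : ¬((lo i).isSome ∧ (hi i).isSome) := fun h => hiF ((hmemF i).mpr h)
        by_cases hl : (lo i).isSome
        · have hh : ¬(hi i).isSome := fun h => hnotboth ⟨hl, h⟩
          obtain ⟨l, hl'⟩ := Option.isSome_iff_exists.mp hl
          have hbase_i : base i = l := by simp [hbase, hl']
          have hεi : ε i = 1 := by simp [hε, hl]
          rw [hεi, one_mul] at hxi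
          constructor
          · intro z hz
            rw [hl'] at hz
            simp at hz
            omega
          · intro z hz
            exfalso
            apply hh
            rw [Option.isSome_iff_exists]
            exact ⟨z, hz⟩
        · have hh : (hi i).isSome := by
            rcases hp i with h | h
            · exact absurd (Option.ne_none_iff_isSome.mp h) hl
            · exact Option.ne_none_iff_isSome.mp h
          obtain ⟨h, hh'⟩ := Option.isSome_iff_exists.mp hh
          have hlo_none : lo i = none := Option.not_isSome_iff_eq_none.mp hl
          have hbase_i : base i = h := by simp [hbase, hlo_none, hh']
          have hεi : ε i = -1 := by simp [hε, hl]
          rw [hεi] at hxi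
          constructor
          · intro z hz
            rw [hlo_none] at hz
            simp at hz
          · intro z hz
            rw [hh'] at hz
            simp at hz
            omega
    · intro hx
      refine ⟨orthSet (fun i => if i ∈ F then x i else base i) J ε,
        ⟨fun i => if i ∈ F then x i else base i, ⟨?_, ?_⟩, rfl⟩, ?_⟩
      · intro i hi
        simp only [if_pos hi]
        exact hx i
      · intro i hi
        simp only [if_neg hi]
      · intro i
        refine ⟨fun hiJ => ?_, fun hiJ => ?_⟩
        · have hiF : i ∉ F := (hJF i).mp hiJ
          simp only [if_neg hiF]
          by_cases hl : (lo i).isSome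
          · obtain ⟨l, hl'⟩ := Option.isSome_iff_exists.mp hl
            have hbase_i : base i = l := by simp [hbase, hl']
            have hεi : ε i = 1 := by simp [hε, hl]
            have := (hx i).1 l (by rw [hl']; rfl)
            rw [hεi, hbase_i]
            omega
          · have hh : (hi i).isSome := by
              rcases hp i with h | h
              · exact absurd (Option.ne_none_iff_isSome.mp h) hl
              · exact Option.ne_none_iff_isSome.mp h
            obtain ⟨h, hh'⟩ := Option.isSome_iff_exists.mp hh
            have hlo_none : lo i = none := Option.not_isSome_iff_eq_none.mp hl
            have hbase_i : base i = h := by simp [hbase, hlo_none, hh']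
            have hεi : ε i = -1 := by simp [hε, hl]
            have := (hx i).2 h (by rw [hh']; rfl)
            rw [hεi, hbase_i]
            nlinarith
        · have hiF : i ∈ F := by
            by_contra hiF
            exact hiJ ((hJF i).mpr hiF)
          simp only [if_pos hiF]

def pieceBounds (lo hi lo' hi' : Fin N → Option ℤ) :
    Fin N × Bool → (Fin N → Option ℤ) × (Fin N → Option ℤ) := fun p =>
  match p.2, lo' p.1, hi' p.1 with
  | false, some l', _ =>
      (fun j => if j < p.1 then omax (lo j) (lo' j) else lo j,
       fun j => if j < p.1 then omin (hi j) (hi' j)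
                else if j = p.1 then omin (hi j) (some (l' - 1)) else hi j)
  | true, _, some h' =>
      (fun j => if j < p.1 then omax (lo j) (lo' j)
                else if j = p.1 then omax (lo j) (omax (lo' j) (some (h' + 1))) else lo j,
       fun j => if j < p.1 then omin (hi j) (hi' j) else hi j)
  | _, _, _ =>
      (fun j => if j = p.1 then some 1 else lo j,
       fun j => if j = p.1 then some 0 else hi j)

lemma boxSet_diff (lo hi lo' hi' : Fin N → Option ℤ) (hp : BoxProper lo hi) :
    ∃ P : Fin N × Bool → (Fin N → Option ℤ) × (Fin N → Option ℤ),
      (∀ p, BoxProper (P p).1 (P p).2) ∧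
      (boxSet lo hi \ boxSet lo' hi' = ⋃ p, boxSet (P p).1 (P p).2) ∧
      (∀ p q, p ≠ q → Disjoint (boxSet (P p).1 (P p).2) (boxSet (P q).1 (P q).2)) := by
  classical
  refine ⟨pieceBounds lo hi lo' hi', ?_, ?_, ?_⟩
  · -- properness
    rintro ⟨i, b⟩
    intro j
    have hpj := hp j
    cases b
    · rcases hl : lo' i with _ | l' <;> simp only [pieceBounds, hl]
      · by_cases hji : j = i
        · left; simp [hji]
        · simp only [if_neg hji]
          exact hpj
      · by_cases hji : j < i
        · simp only [if_pos hji]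
          rcases hpj with h | h
          · exact Or.inl (omax_ne_none_left h)
          · exact Or.inr (omin_ne_none_left h)
        · simp only [if_neg hji]
          by_cases hje : j = i
          · right; simp only [if_pos hje]
            exact omin_ne_none_right (by simp)
          · simp only [if_neg hje]
            exact hpj
    · rcases hh : hi' i with _ | h' <;> simp only [pieceBounds, hh]
      · by_cases hji : j = i
        · left; simp [hji]
        · simp only [if_neg hji]
          exact hpj
      · by_cases hji : j < i
        · simp only [if_pos hji]
          rcases hpj with h | h
          · exact Or.inl (omax_ne_none_left h)
          · exact Or.inr (omin_ne_none_left h)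
        · simp only [if_neg hji]
          by_cases hje : j = i
          · left; simp only [if_pos hje]
            exact omax_ne_none_right (omax_ne_none_right (by simp))
          · simp only [if_neg hje]
            exact hpj
  · -- the union
    ext x
    simp only [Set.mem_diff, Set.mem_iUnion]
    constructor
    · rintro ⟨hxB, hxB'⟩
      have hex : ∃ i, ¬((∀ l ∈ lo' i, l ≤ x i) ∧ (∀ h ∈ hi' i, x i ≤ h)) := by
        by_contra h
        push_neg at h
        exact hxB' (fun i => h i)
      set V : Finset (Fin N) :=
        Finset.univ.filter (fun i => ¬((∀ l ∈ lo' i, l ≤ x i) ∧ (∀ h ∈ hi' i, x i ≤ h)))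
        with hV
      have hVne : V.Nonempty := by
        obtain ⟨i, hi⟩ := hex
        exact ⟨i, by rw [hV]; exact Finset.mem_filter.mpr ⟨Finset.mem_univ _, hi⟩⟩
      set i₀ := V.min' hVne with hi₀
      have hi₀V : i₀ ∈ V := V.min'_mem hVne
      have hi₀viol : ¬((∀ l ∈ lo' i₀, l ≤ x i₀) ∧ (∀ h ∈ hi' i₀, x i₀ ≤ h)) := by
        have h := hi₀V
        rw [hV] at h
        exact (Finset.mem_filter.mp h).2
      have hmin : ∀ j, j < i₀ → ((∀ l ∈ lo' j, l ≤ x j) ∧ (∀ h ∈ hi' j, x j ≤ h)) := by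
        intro j hj
        by_contra hjv
        have hjV : j ∈ V := by rw [hV]; exact Finset.mem_filter.mpr ⟨Finset.mem_univ _, hjv⟩
        exact absurd (V.min'_le j hjV) (not_le.mpr hj)
      by_cases hvl : ∀ l ∈ lo' i₀, l ≤ x i₀
      · -- upper violation
        have hvh : ∃ h', hi' i₀ = some h' ∧ h' < x i₀ := by
          rcases hh : hi' i₀ with _ | h'
          · exfalso
            apply hi₀viol
            refine ⟨hvl, ?_⟩
            rw [hh]; simp
          · refine ⟨h', rfl, ?_⟩
            by_contra hle
            push_neg at hle
            exact hi₀viol ⟨hvl, by rw [hh]; simpa using hle⟩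
        obtain ⟨h', hh', hlt⟩ := hvh
        refine ⟨(i₀, true), ?_⟩
        intro j
        simp only [pieceBounds, hh']
        by_cases hji : j < i₀
        · simp only [if_pos hji]
          refine ⟨omax_le.mpr ⟨(hxB j).1, (hmin j hji).1⟩,
            omin_ge.mpr ⟨(hxB j).2, (hmin j hji).2⟩⟩
        · simp only [if_neg hji]
          by_cases hje : j = i₀
          · simp only [if_pos hje]
            refine ⟨omax_le.mpr ⟨(hxB j).1, omax_le.mpr ⟨?_, ?_⟩⟩, (hxB j).2⟩
            · intro z hz
              rw [hje] at hz ⊢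
              exact hvl z hz
            · intro z hz
              simp only [Option.mem_def, Option.some_inj] at hz
              rw [hje]
              omega
          · simp only [if_neg hje]
            exact hxB j
      · -- lower violation
        have hvlo : ∃ l', lo' i₀ = some l' ∧ x i₀ < l' := by
          push_neg at hvl
          obtain ⟨l', hl', hlt⟩ := hvl
          rcases hl : lo' i₀ with _ | l''
          · rw [hl] at hl'; simp at hl'
          · rw [hl] at hl'
            simp only [Option.mem_def, Option.some_inj] at hl'
            subst hl'
            exact ⟨l'', rfl, by omega⟩
        obtain ⟨l', hl', hlt⟩ := hvlo
        refine ⟨(i₀, false), ?_⟩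
        intro j
        simp only [pieceBounds, hl']
        by_cases hji : j < i₀
        · simp only [if_pos hji]
          refine ⟨omax_le.mpr ⟨(hxB j).1, (hmin j hji).1⟩,
            omin_ge.mpr ⟨(hxB j).2, (hmin j hji).2⟩⟩
        · simp only [if_neg hji]
          by_cases hje : j = i₀
          · simp only [if_pos hje]
            refine ⟨(hxB j).1, omin_ge.mpr ⟨(hxB j).2, ?_⟩⟩
            intro z hz
            simp only [Option.mem_def, Option.some_inj] at hz
            rw [hje]
            omega
          · simp only [if_neg hje]
            exact hxB j
    · rintro ⟨⟨i, b⟩, hx⟩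
      cases b
      · rcases hl : lo' i with _ | l'
        · exfalso
          have h1 := (hx i).1 1 (by simp [pieceBounds, hl])
          have h2 := (hx i).2 0 (by simp [pieceBounds, hl])
          omega
        · constructor
          · intro j
            have hxj := hx j
            simp only [pieceBounds, hl] at hxj
            by_cases hji : j < i
            · simp only [if_pos hji] at hxj
              exact ⟨(omax_le.mp hxj.1).1, (omin_ge.mp hxj.2).1⟩
            · simp only [if_neg hji] at hxj
              by_cases hje : j = i
              · simp only [if_pos hje] at hxj
                exact ⟨hxj.1, (omin_ge.mp hxj.2).1⟩
              · simp only [if_neg hje] at hxj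
                exact hxj
          · intro hxB'
            have hxi := hx i
            simp only [pieceBounds, hl] at hxi
            have h1 : x i ≤ l' - 1 := by
              have := hxi.2
              rw [if_neg (lt_irrefl i), if_true] at this
              exact (omin_ge.mp this).2 (l' - 1) rfl
            have h2 := (hxB' i).1 l' (by rw [hl]; rfl)
            omega
      · rcases hh : hi' i with _ | h'
        · exfalso
          have h1 := (hx i).1 1 (by simp [pieceBounds, hh])
          have h2 := (hx i).2 0 (by simp [pieceBounds, hh])
          omega
        · constructor
          · intro j
            have hxj := hx j
            simp only [pieceBounds, hh] at hxj
            by_cases hji : j < i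
            · simp only [if_pos hji] at hxj
              exact ⟨(omax_le.mp hxj.1).1, (omin_ge.mp hxj.2).1⟩
            · simp only [if_neg hji] at hxj
              by_cases hje : j = i
              · simp only [if_pos hje] at hxj
                exact ⟨(omax_le.mp hxj.1).1, hxj.2⟩
              · simp only [if_neg hje] at hxj
                exact hxj
          · intro hxB'
            have hxi := hx i
            simp only [pieceBounds, hh] at hxi
            have h1 : h' + 1 ≤ x i := by
              have := hxi.1
              rw [if_neg (lt_irrefl i), if_true] at this
              exact (omax_le.mp (omax_le.mp this).2).2 (h' + 1) rfl
            have h2 := (hxB' i).2 h' (by rw [hh]; rfl)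
            omega
  · rintro ⟨i, b⟩ ⟨i', b'⟩ hne
    rw [Set.disjoint_left]
    intro x hx hx'
    have hsat : ∀ (ii : Fin N) (bb : Bool),
        x ∈ boxSet (pieceBounds lo hi lo' hi' (ii, bb)).1 (pieceBounds lo hi lo' hi' (ii, bb)).2 →
        ∀ jj, jj < ii → ((∀ l ∈ lo' jj, l ≤ x jj) ∧ (∀ h ∈ hi' jj, x jj ≤ h)) := by
      intro ii bb hxm jj hlt
      cases bb
      · rcases hl : lo' ii with _ | l'
        · exfalso
          have h1 := (hxm ii).1 1 (by simp [pieceBounds, hl])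
          have h2 := (hxm ii).2 0 (by simp [pieceBounds, hl])
          omega
        · have hxj := hxm jj
          simp only [pieceBounds, hl] at hxj
          simp only [if_pos hlt] at hxj
          exact ⟨(omax_le.mp hxj.1).2, (omin_ge.mp hxj.2).2⟩
      · rcases hh : hi' ii with _ | h'
        · exfalso
          have h1 := (hxm ii).1 1 (by simp [pieceBounds, hh])
          have h2 := (hxm ii).2 0 (by simp [pieceBounds, hh])
          omega
        · have hxj := hxm jj
          simp only [pieceBounds, hh] at hxj
          simp only [if_pos hlt] at hxj
          exact ⟨(omax_le.mp hxj.1).2, (omin_ge.mp hxj.2).2⟩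
    have hviol : ∀ (ii : Fin N) (bb : Bool),
        x ∈ boxSet (pieceBounds lo hi lo' hi' (ii, bb)).1 (pieceBounds lo hi lo' hi' (ii, bb)).2 →
        ¬((∀ l ∈ lo' ii, l ≤ x ii) ∧ (∀ h ∈ hi' ii, x ii ≤ h)) := by
      intro ii bb hxm hsat'
      cases bb
      · rcases hl : lo' ii with _ | l'
        · have h1 := (hxm ii).1 1 (by simp [pieceBounds, hl])
          have h2 := (hxm ii).2 0 (by simp [pieceBounds, hl])
          omega
        · have hxi := (hxm ii).2
          simp only [pieceBounds, hl] at hxi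
          rw [if_neg (lt_irrefl ii), if_true] at hxi
          have h1 := (omin_ge.mp hxi).2 (l' - 1) rfl
          have h2 := hsat'.1 l' (by rw [hl]; rfl)
          omega
      · rcases hh : hi' ii with _ | h'
        · have h1 := (hxm ii).1 1 (by simp [pieceBounds, hh])
          have h2 := (hxm ii).2 0 (by simp [pieceBounds, hh])
          omega
        · have hxi := (hxm ii).1
          simp only [pieceBounds, hh] at hxi
          rw [if_neg (lt_irrefl ii), if_true] at hxi
          have h1 := (omax_le.mp (omax_le.mp hxi).2).2 (h' + 1) rfl
          have h2 := hsat'.2 h' (by rw [hh]; rfl)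
          omega
    rcases lt_trichotomy i i' with hlt | heq | hgt
    · exact hviol i b hx (hsat i' b' hx' i hlt)
    · subst heq
      have hbb : b ≠ b' := by
        intro h
        exact hne (by rw [h])
      cases b <;> cases b'
      · exact absurd rfl hbb
      · rcases hl : lo' i with _ | l'
        · have h1 := (hx i).1 1 (by simp [pieceBounds, hl])
          have h2 := (hx i).2 0 (by simp [pieceBounds, hl])
          omega
        · rcases hh : hi' i with _ | h'
          · have h1 := (hx' i).1 1 (by simp [pieceBounds, hh])
            have h2 := (hx' i).2 0 (by simp [pieceBounds, hh])
            omega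
          · have hxi := (hx i).2
            simp only [pieceBounds, hl] at hxi
            rw [if_neg (lt_irrefl i), if_true] at hxi
            have h1 := (omin_ge.mp hxi).2 (l' - 1) rfl
            have hxi' := (hx' i).1
            simp only [pieceBounds, hh] at hxi'
            rw [if_neg (lt_irrefl i), if_true] at hxi'
            have h2 := (omax_le.mp (omax_le.mp hxi').2).1 l' (by rw [hl]; rfl)
            omega
      · rcases hl : lo' i with _ | l'
        · have h1 := (hx' i).1 1 (by simp [pieceBounds, hl])
          have h2 := (hx' i).2 0 (by simp [pieceBounds, hl])
          omega
        · rcases hh : hi' i with _ | h'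
          · have h1 := (hx i).1 1 (by simp [pieceBounds, hh])
            have h2 := (hx i).2 0 (by simp [pieceBounds, hh])
            omega
          · have hxi := (hx' i).2
            simp only [pieceBounds, hl] at hxi
            rw [if_neg (lt_irrefl i), if_true] at hxi
            have h1 := (omin_ge.mp hxi).2 (l' - 1) rfl
            have hxi' := (hx i).1
            simp only [pieceBounds, hh] at hxi'
            rw [if_neg (lt_irrefl i), if_true] at hxi'
            have h2 := (omax_le.mp (omax_le.mp hxi').2).1 l' (by rw [hl]; rfl)
            omega
      · exact absurd rfl hbb
    · exact hviol i' b' hx' (hsat i b hx i' hgt)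


def IsBoxP (M : Set (Fin N → ℤ)) : Prop := ∃ lo hi, BoxProper lo hi ∧ M = boxSet lo hi

lemma orthant_isBoxP {L : Set (Fin N → ℤ)} (h : IsOrthant L) : IsBoxP L := by
  obtain ⟨m, hm⟩ := h
  obtain ⟨a, J, ε, hε, _, rfl⟩ := isOrthantOfRank_iff.mp hm
  obtain ⟨lo, hi, hp, heq⟩ := orthSet_eq_boxSet a J ε hε
  exact ⟨lo, hi, hp, heq⟩

lemma goodFam_union {𝓟 𝓠 : Set (Set (Fin N → ℤ))} {X Y : Set (Fin N → ℤ)}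
    (hXY : Disjoint X Y) (hP : GoodFam 𝓟 X) (hQ : GoodFam 𝓠 Y) :
    GoodFam (𝓟 ∪ 𝓠) (X ∪ Y) := by
  obtain ⟨hPfin, hPorth, hPdisj, hPun⟩ := hP
  obtain ⟨hQfin, hQorth, hQdisj, hQun⟩ := hQ
  refine ⟨hPfin.union hQfin, ?_, ?_, ?_⟩
  · rintro L (h | h)
    exacts [hPorth L h, hQorth L h]
  · intro a ha b hb hab
    rcases ha with ha | ha <;> rcases hb with hb | hb
    · exact hPdisj ha hb hab
    · refine Set.disjoint_of_subset ?_ ?_ hXY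
      · rw [← hPun]; exact Set.subset_sUnion_of_mem ha
      · rw [← hQun]; exact Set.subset_sUnion_of_mem hb
    · refine Set.disjoint_of_subset ?_ ?_ hXY.symm
      · rw [← hQun]; exact Set.subset_sUnion_of_mem ha
      · rw [← hPun]; exact Set.subset_sUnion_of_mem hb
    · exact hQdisj ha hb hab
  · rw [Set.sUnion_union, hPun, hQun]

lemma goodFam_iUnion {ι : Type} [Finite ι] {A : ι → Set (Fin N → ℤ)}
    {𝓟 : ι → Set (Set (Fin N → ℤ))}
    (hdis : ∀ p q, p ≠ q → Disjoint (A p) (A q))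
    (h : ∀ p, GoodFam (𝓟 p) (A p)) : GoodFam (⋃ p, 𝓟 p) (⋃ p, A p) := by
  refine ⟨Set.finite_iUnion (fun p => (h p).1), ?_, ?_, ?_⟩
  · rintro L hL
    rw [Set.mem_iUnion] at hL
    obtain ⟨p, hp⟩ := hL
    exact (h p).2.1 L hp
  · intro a ha b hb hab
    rw [Set.mem_iUnion] at ha hb
    obtain ⟨p, hp⟩ := ha
    obtain ⟨q, hq⟩ := hb
    by_cases hpq : p = q
    · subst hpq
      exact (h p).2.2.1 hp hq hab
    · refine Set.disjoint_of_subset ?_ ?_ (hdis p q hpq)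
      · exact (Set.subset_sUnion_of_mem hp).trans (le_of_eq (h p).2.2.2)
      · exact (Set.subset_sUnion_of_mem hq).trans (le_of_eq (h q).2.2.2)
  · rw [Set.sUnion_iUnion]
    exact Set.iUnion_congr (fun p => (h p).2.2.2)

lemma box_diff_sUnion {𝓜 : Set (Set (Fin N → ℤ))} (h𝓜 : 𝓜.Finite) :
    (∀ M ∈ 𝓜, IsBoxP M) → ∀ lo hi, BoxProper lo hi →
      ∃ 𝓟, GoodFam 𝓟 (boxSet lo hi \ ⋃₀ 𝓜) := by
  refine Set.Finite.induction_on
    (motive := fun 𝓜 _ => (∀ M ∈ 𝓜, IsBoxP M) → ∀ lo hi, BoxProper lo hi →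
      ∃ 𝓟, GoodFam 𝓟 (boxSet lo hi \ ⋃₀ 𝓜)) 𝓜 h𝓜 ?_ ?_
  · intro _ lo hi hp
    obtain ⟨𝓟, hP⟩ := boxSet_goodFam lo hi hp
    refine ⟨𝓟, ?_⟩
    rw [Set.sUnion_empty, Set.diff_empty]
    exact hP
  · intro M rest hMnot hMfin ih hbox lo hi hp
    obtain ⟨lo', hi', hp', hMeq⟩ := hbox M (Set.mem_insert _ _)
    obtain ⟨P, hPprop, hPun, hPdisj⟩ := boxSet_diff lo hi lo' hi' hp
    have hih : ∀ p, ∃ 𝓟, GoodFam 𝓟 (boxSet (P p).1 (P p).2 \ ⋃₀ rest) := fun p =>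
      ih (fun M' hM' => hbox M' (Set.mem_insert_of_mem _ hM')) (P p).1 (P p).2 (hPprop p)
    choose 𝓟f h𝓟f using hih
    refine ⟨⋃ p, 𝓟f p, ?_⟩
    have hgf := goodFam_iUnion (A := fun p => boxSet (P p).1 (P p).2 \ ⋃₀ rest)
      (fun p q hpq => Set.disjoint_of_subset Set.diff_subset Set.diff_subset (hPdisj p q hpq))
      h𝓟f
    have hseteq : (⋃ p, (boxSet (P p).1 (P p).2 \ ⋃₀ rest)) =
        boxSet lo hi \ ⋃₀ (insert M rest) := by
      rw [← Set.iUnion_diff, ← hPun, Set.sUnion_insert, ← hMeq, Set.diff_diff]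
    rw [hseteq] at hgf
    exact hgf

lemma orthohedral_diff {𝓛 : Set (Set (Fin N → ℤ))} (h𝓛 : 𝓛.Finite) :
    (∀ L ∈ 𝓛, IsOrthant L) → ∀ (𝓜 : Set (Set (Fin N → ℤ))), 𝓜.Finite →
      (∀ M ∈ 𝓜, IsBoxP M) → ∃ 𝓟, GoodFam 𝓟 (⋃₀ 𝓛 \ ⋃₀ 𝓜) := by
  refine Set.Finite.induction_on
    (motive := fun 𝓛 _ => (∀ L ∈ 𝓛, IsOrthant L) → ∀ (𝓜 : Set (Set (Fin N → ℤ))), 𝓜.Finite →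
      (∀ M ∈ 𝓜, IsBoxP M) → ∃ 𝓟, GoodFam 𝓟 (⋃₀ 𝓛 \ ⋃₀ 𝓜)) 𝓛 h𝓛 ?_ ?_
  · intro _ 𝓜 _ _
    refine ⟨∅, Set.finite_empty, by simp, by simp, ?_⟩
    rw [Set.sUnion_empty]
    exact (Set.empty_diff _).symm
  · intro L rest hnot hfin ih horth 𝓜 h𝓜 hbox
    obtain ⟨lo, hi, hp, hLeq⟩ := orthant_isBoxP (horth L (Set.mem_insert _ _))
    obtain ⟨𝓟₁, h𝓟₁⟩ := box_diff_sUnion h𝓜 hbox lo hi hp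
    obtain ⟨𝓟₂, h𝓟₂⟩ := ih (fun L' hL' => horth L' (Set.mem_insert_of_mem _ hL'))
      (insert L 𝓜) (h𝓜.insert L) (fun M hM => by
        rcases Set.mem_insert_iff.mp hM with rfl | hM'
        · exact ⟨lo, hi, hp, hLeq⟩
        · exact hbox M hM')
    have hdisj : Disjoint (boxSet lo hi \ ⋃₀ 𝓜) (⋃₀ rest \ ⋃₀ (insert L 𝓜)) := by
      rw [Set.disjoint_left]
      rintro x ⟨hx1, _⟩ ⟨_, hx2⟩
      exact hx2 ⟨L, Set.mem_insert _ _, by rw [hLeq]; exact hx1⟩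
    have hgf := goodFam_union hdisj h𝓟₁ h𝓟₂
    have hseteq : (boxSet lo hi \ ⋃₀ 𝓜) ∪ (⋃₀ rest \ ⋃₀ (insert L 𝓜)) =
        ⋃₀ (insert L rest) \ ⋃₀ 𝓜 := by
      rw [Set.sUnion_insert, Set.sUnion_insert, ← hLeq]
      ext x
      simp only [Set.mem_union, Set.mem_diff, Set.mem_union]
      constructor
      · rintro (⟨h1, h2⟩ | ⟨h1, h2⟩)
        · exact ⟨Or.inl h1, h2⟩
        · exact ⟨Or.inr h1, fun hx => h2 (Or.inr hx)⟩
      · rintro ⟨h1 | h1, h2⟩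
        · exact Or.inl ⟨h1, h2⟩
        · by_cases hL : x ∈ L
          · exact Or.inl ⟨hL, h2⟩
          · refine Or.inr ⟨h1, fun hx => ?_⟩
            rcases hx with hx | hx
            · exact hL hx
            · exact h2 hx
    rw [hseteq] at hgf
    exact ⟨_, hgf⟩

lemma orthohedral_partition_diff {S : Set (Fin N → ℤ)} (hS : IsOrthohedral S)
    {M₁ M₂ : Set (Fin N → ℤ)} (h1 : IsOrthant M₁) (h2 : IsOrthant M₂) :
    ∃ 𝓟, GoodFam 𝓟 (S \ (M₁ ∪ M₂)) := by
  obtain ⟨𝓛, hfin, horth, rfl⟩ := hS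
  have h := orthohedral_diff hfin horth {M₁, M₂}
    ((Set.finite_singleton M₂).insert M₁)
    (fun M hM => by
      rcases Set.mem_insert_iff.mp hM with rfl | hM'
      · exact orthant_isBoxP h1
      · rw [Set.mem_singleton_iff.mp hM']
        exact orthant_isBoxP h2)
  rwa [Set.sUnion_pair] at h

end Aux6

section Aux7
variable {N : ℕ} {S : Set (Fin N → ℤ)} {k : ℕ}

lemma update_ne_escape {c : Fin N → ℤ} {K : Finset (Fin N)} {χ : Fin N → ℤ}
    (hχ : Signs χ) {i : Fin N} {u : ℤ} (hu : 1 ≤ u) :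
    Function.update c i (c i + u * χ i) i ≠ c i := by
  rw [Function.update_self]
  rcases hχ i with h | h <;> rw [h] <;> intro hc <;> omega

/-- an orthant inside a union of two orthants has rank bounded by the max. -/
lemma union_rank_aux {c b₁ b₂ : Fin N → ℤ} {K J₁ J₂ : Finset (Fin N)}
    {χ ε₁ ε₂ : Fin N → ℤ} (hχ : Signs χ)
    (hsub : orthSet c K χ ⊆ orthSet b₁ J₁ ε₁ ∪ orthSet b₂ J₂ ε₂)
    (hcM : c ∈ orthSet b₁ J₁ ε₁)
    {i j : Fin N} (hiK : i ∈ K) (hiJ : i ∉ J₁) (hjK : j ∈ K) (hjJ : j ∉ J₂) : False := by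
  have hcQ : c ∈ orthSet c K χ := base_mem_orthSet c K χ
  have hy : ∀ u : ℤ, 0 ≤ u → Function.update c i (c i + u * χ i) ∈ orthSet c K χ :=
    fun u hu => mem_update_orthSet hχ hcQ hiK hu
  have hyM2 : ∀ u : ℤ, 1 ≤ u → Function.update c i (c i + u * χ i) ∈ orthSet b₂ J₂ ε₂ := by
    intro u hu
    rcases hsub (hy u (by omega)) with h | h
    · exfalso
      have h1 := (h i).2 hiJ
      have h2 := (hcM i).2 hiJ
      rw [Function.update_self] at h1
      rcases hχ i with hs | hs <;> rw [hs] at h1 <;> omega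
    · exact h
  by_cases hij : i = j
  · subst hij
    have h1 := (hyM2 1 le_rfl i).2 hjJ
    have h2 := (hyM2 2 (by omega) i).2 hjJ
    rw [Function.update_self] at h1 h2
    rcases hχ i with hs | hs <;> rw [hs] at h1 h2 <;> omega
  · set y := Function.update c i (c i + 1 * χ i) with hydef
    have hyQ : y ∈ orthSet c K χ := hy 1 (by omega)
    have hz : ∀ u : ℤ, 0 ≤ u → Function.update y j (y j + u * χ j) ∈ orthSet c K χ :=
      fun u hu => mem_update_orthSet hχ hyQ hjK hu
    have hzi : ∀ u : ℤ, Function.update y j (y j + u * χ j) i = y i :=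
      fun u => Function.update_of_ne hij _ _
    have hzM2 : ∀ u : ℤ, 0 ≤ u → Function.update y j (y j + u * χ j) ∈ orthSet b₂ J₂ ε₂ := by
      intro u hu
      rcases hsub (hz u hu) with h | h
      · exfalso
        have h1 := (h i).2 hiJ
        rw [hzi u] at h1
        have h2 := (hcM i).2 hiJ
        rw [hydef, Function.update_self] at h1
        rcases hχ i with hs | hs <;> rw [hs] at h1 <;> omega
      · exact h
    have h1 := (hzM2 0 le_rfl j).2 hjJ
    have h2 := (hzM2 1 (by omega) j).2 hjJ
    rw [Function.update_self] at h1 h2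
    rcases hχ j with hs | hs <;> rw [hs] at h1 h2 <;> omega

lemma rank_le_of_subset_union {Q M₁ M₂ : Set (Fin N → ℤ)} {m k₁ k₂ : ℕ}
    (hQ : IsOrthantOfRank Q m) (h₁ : IsOrthantOfRank M₁ k₁) (h₂ : IsOrthantOfRank M₂ k₂)
    (hsub : Q ⊆ M₁ ∪ M₂) : m ≤ max k₁ k₂ := by
  by_contra hgt
  push_neg at hgt
  obtain ⟨c, K, χ, hχ, hK, rfl⟩ := isOrthantOfRank_iff.mp hQ
  obtain ⟨b₁, J₁, ε₁, hε₁, hJ₁, rfl⟩ := isOrthantOfRank_iff.mp h₁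
  obtain ⟨b₂, J₂, ε₂, hε₂, hJ₂, rfl⟩ := isOrthantOfRank_iff.mp h₂
  have hex1 : ∃ i ∈ K, i ∉ J₁ := by
    by_contra h
    push_neg at h
    have := Finset.card_le_card h
    omega
  have hex2 : ∃ j ∈ K, j ∉ J₂ := by
    by_contra h
    push_neg at h
    have := Finset.card_le_card h
    omega
  obtain ⟨i, hiK, hiJ⟩ := hex1
  obtain ⟨j, hjK, hjJ⟩ := hex2
  rcases hsub (base_mem_orthSet c K χ) with hc | hc
  · exact union_rank_aux hχ hsub hc hiK hiJ hjK hjJ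
  · exact union_rank_aux hχ (hsub.trans (le_of_eq (Set.union_comm _ _))) hc hjK hjJ hiK hiJ

lemma exists_perm_mapsto {J₁ J₂ : Finset (Fin N)} (hcard : J₁.card = J₂.card) :
    ∃ π : Equiv.Perm (Fin N), ∀ i, (i ∈ J₂ ↔ π i ∈ J₁) := by
  classical
  have e₁ : {i // i ∈ J₂} ≃ {i // i ∈ J₁} :=
    Fintype.equivOfCardEq (by rw [Fintype.card_coe, Fintype.card_coe, hcard])
  have e₂ : {i // ¬i ∈ J₂} ≃ {i // ¬i ∈ J₁} :=
    Fintype.equivOfCardEq (by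
      rw [Fintype.card_subtype_compl, Fintype.card_subtype_compl]
      congr 1
      rw [Fintype.card_coe, Fintype.card_coe, hcard])
  refine ⟨(Equiv.sumCompl (· ∈ J₂)).symm.trans ((e₁.sumCongr e₂).trans
    (Equiv.sumCompl (· ∈ J₁))), ?_⟩
  intro i
  by_cases hi : i ∈ J₂
  · simp only [Equiv.trans_apply, Equiv.sumCompl_symm_apply_of_pos hi,
      Equiv.sumCongr_apply, Sum.map_inl, Equiv.sumCompl_apply_inl]
    exact iff_of_true hi (e₁ ⟨i, hi⟩).2
  · simp only [Equiv.trans_apply, Equiv.sumCompl_symm_apply_of_neg hi,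
      Equiv.sumCongr_apply, Sum.map_inr, Equiv.sumCompl_apply_inr]
    exact iff_of_false hi (e₂ ⟨i, hi⟩).2

end Aux7


section Aux8
variable {N : ℕ} {S : Set (Fin N → ℤ)} {k : ℕ}

lemma swap_realized [DecidableEq (Germ S k)] (hS : IsOrthohedral S) (L₁ L₂ : germSet S k)
    (hncomm : ¬Commensurable L₁.1 L₂.1) :
    ∃ g : Equiv.Perm (Fin N → ℤ), IsPeiPerm S g ∧ rankLE g k ∧
      ∀ (hg : IsPeiPerm S g) (γ : Germ S k),
        germMap g hg γ = Equiv.swap (germOf S k L₁) (germOf S k L₂) γ := by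
  classical
  obtain ⟨a₁, J₁, ε₁, hε₁, hJ₁, hL₁eq⟩ := isOrthantOfRank_iff.mp L₁.2.1
  obtain ⟨a₂, J₂, ε₂, hε₂, hJ₂, hL₂eq⟩ := isOrthantOfRank_iff.mp L₂.2.1
  have hnd : ¬(J₁ = J₂ ∧ (∀ i ∈ J₁, ε₂ i = ε₁ i) ∧ (∀ i ∉ J₁, a₁ i = a₂ i)) := by
    rintro ⟨hJ, hs, ho⟩
    apply hncomm
    rw [hL₁eq, hL₂eq]
    subst hJ
    rw [orthSet_congr hs]
    exact comm_of_data hε₁ ho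
  have hcard21 : J₂.card ≤ J₁.card := by rw [hJ₁, hJ₂]
  obtain ⟨t₁, ht₁⟩ := escape hε₁ hε₂ hcard21 hnd
  set b₁ : Fin N → ℤ := deepPoint a₁ J₁ ε₁ t₁ with hb₁def
  set M₁ := orthSet b₁ J₁ ε₁ with hM₁def
  set M₂ := orthSet a₂ J₂ ε₂ with hM₂def
  have hM₁L : M₁ ⊆ L₁.1 := by rw [hL₁eq]; exact deep_subset hε₁ (by positivity)
  have hM₂L : M₂ = L₂.1 := hL₂eq.symm
  have hM₁r : IsOrthantOfRank M₁ k := isOrthantOfRank_iff.mpr ⟨b₁, J₁, ε₁, hε₁, hJ₁, rfl⟩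
  have hM₂r : IsOrthantOfRank M₂ k := isOrthantOfRank_iff.mpr ⟨a₂, J₂, ε₂, hε₂, hJ₂, rfl⟩
  have hdisjM : M₁ ∩ M₂ = ∅ := ht₁
  have hcomm1 : Commensurable L₁.1 M₁ := by
    rw [hL₁eq]
    exact comm_of_data hε₁ (fun i hi => (deepPoint_off hi).symm)
  obtain ⟨π, hπ⟩ := exists_perm_mapsto (hJ₁.trans hJ₂.symm)
  set s : Fin N → ℤ := fun i => if i ∈ J₂ then ε₂ i * ε₁ (π i) else 1 with hsdef
  have hsigns : Signs s := by
    intro i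
    by_cases hi : i ∈ J₂
    · simp only [hsdef, if_pos hi]
      rcases hε₂ i with h | h <;> rcases hε₁ (π i) with h' | h' <;> rw [h, h'] <;> simp
    · simp [hsdef, hi]
  have hsq : ∀ i, s i * s i = 1 := hsigns.sq
  set f : (Fin N → ℤ) → (Fin N → ℤ) := fun x i => a₂ i + s i * (x (π i) - b₁ (π i)) with hfdef
  set finv : (Fin N → ℤ) → (Fin N → ℤ) :=
    fun y j => b₁ j + s (π.symm j) * (y (π.symm j) - a₂ (π.symm j)) with hfinvdef
  have hfinvf : ∀ x, finv (f x) = x := by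
    intro x
    funext j
    show b₁ j + s (π.symm j) * (f x (π.symm j) - a₂ (π.symm j)) = x j
    have hfx : f x (π.symm j) = a₂ (π.symm j) + s (π.symm j) * (x j - b₁ j) := by
      show a₂ (π.symm j) + s (π.symm j) * (x (π (π.symm j)) - b₁ (π (π.symm j))) = _
      rw [Equiv.apply_symm_apply]
    rw [hfx]
    have hq := hsq (π.symm j)
    have hid : b₁ j + s (π.symm j) *
        (a₂ (π.symm j) + s (π.symm j) * (x j - b₁ j) - a₂ (π.symm j))
        = b₁ j + (s (π.symm j) * s (π.symm j)) * (x j - b₁ j) := by ring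
    rw [hid, hq]
    ring
  have hffinv : ∀ y, f (finv y) = y := by
    intro y
    funext i
    show a₂ i + s i * (finv y (π i) - b₁ (π i)) = y i
    have hfy : finv y (π i) = b₁ (π i) + s i * (y i - a₂ i) := by
      show b₁ (π i) + s (π.symm (π i)) * (y (π.symm (π i)) - a₂ (π.symm (π i))) = _
      rw [Equiv.symm_apply_apply]
    rw [hfy]
    have hq := hsq i
    have hid : a₂ i + s i * (b₁ (π i) + s i * (y i - a₂ i) - b₁ (π i))
        = a₂ i + (s i * s i) * (y i - a₂ i) := by ring
    rw [hid, hq]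
    ring
  have hfM : ∀ x ∈ M₁, f x ∈ M₂ := by
    intro x hx i
    refine ⟨fun hi => ?_, fun hi => ?_⟩
    · have hπi : π i ∈ J₁ := (hπ i).mp hi
      have hsi : s i = ε₂ i * ε₁ (π i) := by simp [hsdef, hi]
      have hx1 := (hx (π i)).1 hπi
      show 0 ≤ ε₂ i * (f x i - a₂ i)
      have hfi : f x i - a₂ i = s i * (x (π i) - b₁ (π i)) := by
        show a₂ i + s i * (x (π i) - b₁ (π i)) - a₂ i = _
        ring
      rw [hfi, hsi]
      have he2 := hε₂.sq i
      have hid : ε₂ i * (ε₂ i * ε₁ (π i) * (x (π i) - b₁ (π i)))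
          = (ε₂ i * ε₂ i) * (ε₁ (π i) * (x (π i) - b₁ (π i))) := by ring
      rw [hid, he2, one_mul]
      exact hx1
    · have hπi : π i ∉ J₁ := fun h => hi ((hπ i).mpr h)
      have hsi : s i = 1 := by simp [hsdef, hi]
      have hx2 := (hx (π i)).2 hπi
      show f x i = a₂ i
      show a₂ i + s i * (x (π i) - b₁ (π i)) = a₂ i
      rw [hsi, hx2]
      ring
  have hfinvM : ∀ y ∈ M₂, finv y ∈ M₁ := by
    intro y hy j
    refine ⟨fun hj => ?_, fun hj => ?_⟩
    · have hj2 : π.symm j ∈ J₂ := by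
        rw [hπ (π.symm j), Equiv.apply_symm_apply]
        exact hj
      have hsi : s (π.symm j) = ε₂ (π.symm j) * ε₁ (π (π.symm j)) := by
        simp [hsdef, hj2]
      rw [Equiv.apply_symm_apply] at hsi
      have hy1 := (hy (π.symm j)).1 hj2
      show 0 ≤ ε₁ j * (finv y j - b₁ j)
      have hfi : finv y j - b₁ j = s (π.symm j) * (y (π.symm j) - a₂ (π.symm j)) := by
        show b₁ j + s (π.symm j) * (y (π.symm j) - a₂ (π.symm j)) - b₁ j = _
        ring
      rw [hfi, hsi]
      have he1 := hε₁.sq j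
      have hid : ε₁ j * (ε₂ (π.symm j) * ε₁ j * (y (π.symm j) - a₂ (π.symm j)))
          = (ε₁ j * ε₁ j) * (ε₂ (π.symm j) * (y (π.symm j) - a₂ (π.symm j))) := by ring
      rw [hid, he1, one_mul]
      exact hy1
    · have hj2 : π.symm j ∉ J₂ := by
        intro h
        apply hj
        have h2 := (hπ (π.symm j)).mp h
        rwa [Equiv.apply_symm_apply] at h2
      have hsi : s (π.symm j) = 1 := by simp [hsdef, hj2]
      have hy2 := (hy (π.symm j)).2 hj2
      show finv y j = b₁ j
      show b₁ j + s (π.symm j) * (y (π.symm j) - a₂ (π.symm j)) = b₁ j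
      rw [hsi, hy2]
      ring
  have himg : f '' M₁ = M₂ := by
    apply Set.eq_of_subset_of_subset
    · rintro _ ⟨x, hx, rfl⟩; exact hfM x hx
    · intro y hy
      exact ⟨finv y, hfinvM y hy, hffinv y⟩
  have himg' : finv '' M₂ = M₁ := by
    apply Set.eq_of_subset_of_subset
    · rintro _ ⟨y, hy, rfl⟩; exact hfinvM y hy
    · intro x hx
      exact ⟨f x, hfM x hx, hfinvf x⟩
  set gfun : (Fin N → ℤ) → (Fin N → ℤ) :=
    fun x => if x ∈ M₁ then f x else if x ∈ M₂ then finv x else x with hgdef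
  have hgM₁ : ∀ x ∈ M₁, gfun x = f x := fun x hx => by simp [hgdef, hx]
  have hgM₂ : ∀ x ∈ M₂, gfun x = finv x := by
    intro x hx
    have hx1 : x ∉ M₁ := fun h => Set.eq_empty_iff_forall_notMem.mp hdisjM x ⟨h, hx⟩
    simp [hgdef, hx1, hx]
  have hgout : ∀ x, x ∉ M₁ → x ∉ M₂ → gfun x = x := fun x h1 h2 => by simp [hgdef, h1, h2]
  have hinvol : Function.Involutive gfun := by
    intro x
    by_cases h1 : x ∈ M₁
    · rw [hgM₁ x h1]
      have hfx2 : f x ∈ M₂ := hfM x h1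
      rw [hgM₂ _ hfx2]
      exact hfinvf x
    · by_cases h2 : x ∈ M₂
      · rw [hgM₂ x h2]
        have hfy1 : finv x ∈ M₁ := hfinvM x h2
        rw [hgM₁ _ hfy1]
        exact hffinv x
      · rw [hgout x h1 h2, hgout x h1 h2]
  set g : Equiv.Perm (Fin N → ℤ) := hinvol.toPerm with hgPerm
  have hgcoe : ∀ x, g x = gfun x := fun x => rfl
  set A := spMat π s with hAdef
  have hAorth : IsOrthMat A := spMat_orth π hsigns
  have hisoM₁ : IsometricOn (⇑g) M₁ := by
    refine ⟨fun i => a₂ i - s i * b₁ (π i), A, hAorth, fun x hx => ?_⟩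
    rw [hgcoe, hgM₁ x hx]
    funext i
    simp only [Pi.add_apply]
    rw [hAdef, spMat_mulVec]
    show a₂ i + s i * (x (π i) - b₁ (π i)) = _
    ring
  set s' : Fin N → ℤ := fun j => s (π.symm j) with hs'def
  have hs'signs : Signs s' := fun j => hsigns (π.symm j)
  set A' := spMat π.symm s' with hA'def
  have hA'orth : IsOrthMat A' := spMat_orth π.symm hs'signs
  have hisoM₂ : IsometricOn (⇑g) M₂ := by
    refine ⟨fun j => b₁ j - s' j * a₂ (π.symm j), A', hA'orth, fun y hy => ?_⟩
    rw [hgcoe, hgM₂ y hy]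
    funext j
    simp only [Pi.add_apply]
    rw [hA'def, spMat_mulVec]
    show b₁ j + s (π.symm j) * (y (π.symm j) - a₂ (π.symm j)) = _
    show _ = b₁ j - s' j * a₂ (π.symm j) + s' j * y (π.symm j)
    rw [hs'def]
    ring
  obtain ⟨𝓟, h𝓟fin, h𝓟orth, h𝓟disj, h𝓟un⟩ :=
    orthohedral_partition_diff hS ⟨k, hM₁r⟩ ⟨k, hM₂r⟩
  have hM₁S : M₁ ⊆ S := hM₁L.trans L₁.2.2
  have hM₂S : M₂ ⊆ S := by rw [hM₂L]; exact L₂.2.2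
  have h𝓟sub : ∀ P ∈ 𝓟, P ⊆ S \ (M₁ ∪ M₂) := by
    intro P hP
    rw [← h𝓟un]
    exact Set.subset_sUnion_of_mem hP
  have hpei : IsPeiPerm S g := by
    constructor
    · refine ⟨insert M₁ (insert M₂ 𝓟), (h𝓟fin.insert M₂).insert M₁, ?_, ?_, ?_, ?_⟩
      · rintro L hL
        rcases Set.mem_insert_iff.mp hL with rfl | hL
        · exact ⟨k, hM₁r⟩
        rcases Set.mem_insert_iff.mp hL with rfl | hL
        · exact ⟨k, hM₂r⟩
        · exact h𝓟orth L hL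
      · rw [Set.sUnion_insert, Set.sUnion_insert, h𝓟un, ← Set.union_assoc]
        exact (Set.union_diff_cancel (Set.union_subset hM₁S hM₂S)).symm
      · intro a ha b hb hab
        simp only [Set.mem_insert_iff] at ha hb
        have hdM : Disjoint M₁ M₂ := Set.disjoint_iff_inter_eq_empty.mpr hdisjM
        have hdP1 : ∀ P ∈ 𝓟, Disjoint M₁ P := by
          intro P hP
          rw [Set.disjoint_left]
          intro x hx hxP
          exact (h𝓟sub P hP hxP).2 (Or.inl hx)
        have hdP2 : ∀ P ∈ 𝓟, Disjoint M₂ P := by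
          intro P hP
          rw [Set.disjoint_left]
          intro x hx hxP
          exact (h𝓟sub P hP hxP).2 (Or.inr hx)
        rcases ha with rfl | rfl | ha <;> rcases hb with rfl | rfl | hb
        · exact absurd rfl hab
        · exact hdM
        · exact hdP1 b hb
        · exact hdM.symm
        · exact absurd rfl hab
        · exact hdP2 b hb
        · exact (hdP1 a ha).symm
        · exact (hdP2 a ha).symm
        · exact h𝓟disj ha hb hab
      · intro L hL
        rcases Set.mem_insert_iff.mp hL with rfl | hL
        · exact hisoM₁
        rcases Set.mem_insert_iff.mp hL with rfl | hL
        · exact hisoM₂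
        · apply isometricOn_of_fixed
          intro x hx
          have hx' := h𝓟sub L hL hx
          exact (hgcoe x).trans
            (hgout x (fun h => hx'.2 (Or.inl h)) (fun h => hx'.2 (Or.inr h)))
    · intro x hxS
      rw [hgcoe]
      exact hgout x (fun h => hxS (hM₁S h)) (fun h => hxS (hM₂S h))
  have hrank : rankLE g k := by
    refine ⟨M₁ ∪ M₂, ⟨{M₁, M₂}, (Set.finite_singleton M₂).insert M₁, ?_,
      (Set.sUnion_pair _ _).symm⟩, ?_, ?_⟩
    · rintro L hL
      rcases Set.mem_insert_iff.mp hL with rfl | hL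
      · exact ⟨k, hM₁r⟩
      · rw [Set.mem_singleton_iff.mp hL]; exact ⟨k, hM₂r⟩
    · apply csSup_le
      · exact ⟨0, {b₁}, singleton_isOrthant b₁,
          Set.singleton_subset_iff.mpr (Or.inl (base_mem_orthSet b₁ J₁ ε₁))⟩
      · rintro m ⟨Q, hQ, hQsub⟩
        have hle := rank_le_of_subset_union hQ hM₁r hM₂r hQsub
        omega
    · intro x hx
      rw [hgcoe]
      exact hgout x (fun h => hx (Or.inl h)) (fun h => hx (Or.inr h))
  refine ⟨g, hpei, hrank, ?_⟩
  intro hg γ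
  obtain ⟨L, rfl⟩ := Quot.exists_rep γ
  show germMap g hg (germOf S k L) =
    Equiv.swap (germOf S k L₁) (germOf S k L₂) (germOf S k L)
  by_cases hγ1 : Commensurable L.1 L₁.1
  · have heq1 : germOf S k L = germOf S k L₁ := germOf_eq_iff.mpr hγ1
    rw [heq1, Equiv.swap_apply_left]
    have hgM₁img : ⇑g '' M₁ = M₂ := by
      rw [Set.image_congr (fun x hx => (hgcoe x).trans (hgM₁ x hx))]
      exact himg
    have hrep : GoodRep (⇑g) S k L₁.1 M₁ :=
      ⟨hM₁r, hcomm1, hisoM₁, by rw [hgM₁img]; exact ⟨hM₂r, hM₂S⟩⟩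
    rw [germMap_eq hg L₁ hrep]
    apply germOf_eq_iff.mpr
    show Commensurable (⇑g '' M₁) L₂.1
    rw [hgM₁img, ← hM₂L]
    exact comm_refl hM₂r
  · by_cases hγ2 : Commensurable L.1 L₂.1
    · have heq2 : germOf S k L = germOf S k L₂ := germOf_eq_iff.mpr hγ2
      rw [heq2, Equiv.swap_apply_right]
      have hgM₂img : ⇑g '' M₂ = M₁ := by
        rw [Set.image_congr (fun x hx => (hgcoe x).trans (hgM₂ x hx))]
        exact himg'
      have hcommM₂ : Commensurable L₂.1 M₂ := by
        rw [hM₂L]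
        exact comm_refl L₂.2.1
      have hrep : GoodRep (⇑g) S k L₂.1 M₂ :=
        ⟨hM₂r, hcommM₂, hisoM₂, by rw [hgM₂img]; exact ⟨hM₁r, hM₁S⟩⟩
      rw [germMap_eq hg L₂ hrep]
      apply germOf_eq_iff.mpr
      show Commensurable (⇑g '' M₂) L₁.1
      rw [hgM₂img]
      exact comm_symm hcomm1
    · have hne1 : germOf S k L ≠ germOf S k L₁ := fun h => hγ1 (germOf_eq_iff.mp h)
      have hne2 : germOf S k L ≠ germOf S k L₂ := fun h => hγ2 (germOf_eq_iff.mp h)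
      rw [Equiv.swap_apply_of_ne_of_ne hne1 hne2]
      obtain ⟨aL, JL, εL, hεL, hJL, hLeq⟩ := isOrthantOfRank_iff.mp L.2.1
      have hndL1 : ¬(JL = J₁ ∧ (∀ i ∈ JL, ε₁ i = εL i) ∧ (∀ i ∉ JL, aL i = b₁ i)) := by
        rintro ⟨hJ, hs, ho⟩
        apply hγ1
        have hM₁eq : M₁ = orthSet b₁ JL εL := by
          rw [hM₁def, ← hJ]
          exact orthSet_congr hs
        have hcommLM : Commensurable L.1 M₁ := by
          rw [hLeq, hM₁eq]
          exact comm_of_data hεL ho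
        exact comm_trans_rank L.2.1 hM₁r L₁.2.1 hcommLM (comm_symm hcomm1)
      have hndL2 : ¬(JL = J₂ ∧ (∀ i ∈ JL, ε₂ i = εL i) ∧ (∀ i ∉ JL, aL i = a₂ i)) := by
        rintro ⟨hJ, hs, ho⟩
        apply hγ2
        have hM₂eq : L₂.1 = orthSet a₂ JL εL := by
          rw [hL₂eq, hM₂def, ← hJ]
          exact orthSet_congr hs
        rw [hLeq, hM₂eq]
        exact comm_of_data hεL ho
      have hc1 : J₁.card ≤ JL.card := by rw [hJL, hJ₁]
      have hc2 : J₂.card ≤ JL.card := by rw [hJL, hJ₂]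
      obtain ⟨ta, hta⟩ := escape hεL hε₁ hc1 hndL1
      obtain ⟨tb, htb⟩ := escape hεL hε₂ hc2 hndL2
      set t := max ta tb with htdef
      set C := orthSet (deepPoint aL JL εL t) JL εL with hCdef
      have hCsubA : C ⊆ orthSet (deepPoint aL JL εL ta) JL εL :=
        deep_mono hεL (by exact_mod_cast le_max_left ta tb)
      have hCsubB : C ⊆ orthSet (deepPoint aL JL εL tb) JL εL :=
        deep_mono hεL (by exact_mod_cast le_max_right ta tb)
      have hCM₁ : ∀ x ∈ C, x ∉ M₁ := fun x hx h =>
        Set.eq_empty_iff_forall_notMem.mp hta x ⟨hCsubA hx, h⟩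
      have hCM₂ : ∀ x ∈ C, x ∉ M₂ := fun x hx h =>
        Set.eq_empty_iff_forall_notMem.mp htb x ⟨hCsubB hx, h⟩
      have hCfix : ∀ x ∈ C, g x = x := fun x hx =>
        (hgcoe x).trans (hgout x (hCM₁ x hx) (hCM₂ x hx))
      have hCr : IsOrthantOfRank C k := isOrthantOfRank_iff.mpr
        ⟨deepPoint aL JL εL t, JL, εL, hεL, hJL, rfl⟩
      have hCL : C ⊆ L.1 := by rw [hLeq]; exact deep_subset hεL (by positivity)
      have hcommLC : Commensurable L.1 C := by
        rw [hLeq]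
        exact comm_of_data hεL (fun i hi => (deepPoint_off hi).symm)
      have hrep : GoodRep (⇑g) S k L.1 C :=
        goodRep_of_fixed hCr hcommLC (hCL.trans L.2.2) hCfix
      rw [germMap_eq hg L hrep]
      apply germOf_eq_iff.mpr
      show Commensurable (⇑g '' C) L.1
      have himgC : ⇑g '' C = C := by
        rw [Set.image_congr hCfix]; exact Set.image_id C
      rw [himgC]
      exact comm_symm hcommLC

end Aux8


/-- the action on rank-`k` germs induces an isomorphism
`G_k(S)/C(Γ^k(S)) ≅ sym(Γ^k(S))` onto the finitary symmetric group. -/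
theorem stmt11 {N : ℕ} (S : Set (Fin N → ℤ)) (hS : IsOrthohedral S) (k : ℕ)
    (hk : k ≤ orthRank S)
    (Gk : Subgroup (Equiv.Perm (Fin N → ℤ)))
    (hGk : (Gk : Set (Equiv.Perm (Fin N → ℤ))) = {g | IsPeiPerm S g ∧ rankLE g k}) :
    ∃ φ : ↥Gk →* Equiv.Perm (Germ S k),
      (∀ g : ↥Gk, InducesGermMap S k (↑g) ⇑(φ g)) ∧
      ((φ.ker : Set ↥Gk) = {g : ↥Gk | FixesGerm S k (↑g : Equiv.Perm (Fin N → ℤ))}) ∧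
      (Set.range ⇑φ = {σ : Equiv.Perm (Germ S k) | {γ | σ γ ≠ γ}.Finite}) := by
  classical
  have hmem : ∀ g : ↥Gk, IsPeiPerm S (↑g : Equiv.Perm (Fin N → ℤ)) := by
    intro g
    have hg : (↑g : Equiv.Perm (Fin N → ℤ)) ∈ (Gk : Set (Equiv.Perm (Fin N → ℤ))) := g.2
    rw [hGk] at hg
    exact hg.1
  have hrkLE : ∀ g : ↥Gk, rankLE (↑g : Equiv.Perm (Fin N → ℤ)) k := by
    intro g
    have hg : (↑g : Equiv.Perm (Fin N → ℤ)) ∈ (Gk : Set (Equiv.Perm (Fin N → ℤ))) := g.2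
    rw [hGk] at hg
    exact hg.2
  let φfun : ↥Gk → Equiv.Perm (Germ S k) := fun g =>
    { toFun := germMap (↑g) (hmem g)
      invFun := germMap (↑g⁻¹) (hmem g⁻¹)
      left_inv := fun γ => germMap_inverse (hmem g⁻¹) (hmem g) (hmem (g⁻¹ * g))
        (by simp) γ
      right_inv := fun γ => germMap_inverse (hmem g) (hmem g⁻¹) (hmem (g * g⁻¹))
        (by simp) γ }
  let φ : ↥Gk →* Equiv.Perm (Germ S k) :=
    { toFun := φfun
      map_one' := by
        apply Equiv.ext
        intro γ
        exact germMap_one' (hmem 1) rfl γ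
      map_mul' := by
        intro g h
        apply Equiv.ext
        intro γ
        exact germMap_mul (hmem g) (hmem h) (hmem (g * h)) γ }
  refine ⟨φ, ?_, ?_, ?_⟩
  · -- induces the germ map
    intro g L
    obtain ⟨hsubL, hrep⟩ := Classical.choose_spec (germStep (hmem g) L.2.1 L.2.2)
    exact ⟨Classical.choose (germStep (hmem g) L.2.1 L.2.2),
      ⟨⇑(↑g : Equiv.Perm (Fin N → ℤ)) '' Classical.choose (germStep (hmem g) L.2.1 L.2.2),
        hrep.2.2.2⟩,
      hrep.1, hsubL, hrep.2.1, rfl, rfl⟩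
  · -- kernel
    ext g
    simp only [SetLike.mem_coe, MonoidHom.mem_ker, Set.mem_setOf_eq]
    constructor
    · intro hker L hLr hLS
      obtain ⟨hsubL, hrep⟩ := Classical.choose_spec (germStep (hmem g) hLr hLS)
      set C := Classical.choose (germStep (hmem g) hLr hLS) with hCdef
      have h1 : ⇑(φ g) (germOf S k ⟨L, hLr, hLS⟩) =
          germOf S k ⟨⇑(↑g : Equiv.Perm (Fin N → ℤ)) '' C, hrep.2.2.2⟩ :=
        germMap_eq (hmem g) _ hrep
      have h2 : ⇑(φ g) (germOf S k ⟨L, hLr, hLS⟩) = germOf S k ⟨L, hLr, hLS⟩ := by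
        rw [hker]; rfl
      have h3 := germOf_eq_iff.mp (h1.symm.trans h2)
      exact ⟨C, hrep.1, hsubL, hrep.2.1, hrep.2.2.1, h3⟩
    · intro hfix
      apply Equiv.ext
      intro γ
      induction γ using Quot.ind with
      | _ L =>
      obtain ⟨L', hL'r, hL'sub, hcommL, hiso, hcommIm⟩ := hfix L.1 L.2.1 L.2.2
      obtain ⟨ci, Ai, hAi, hfi⟩ := hiso
      have hmemG : ⇑(↑g : Equiv.Perm (Fin N → ℤ)) '' L' ∈ germSet S k := by
        refine ⟨image_orthant hL'r hAi hfi, ?_⟩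
        rw [← perm_image_eq (hmem g).2]
        exact Set.image_mono (hL'sub.trans L.2.2)
      have hrep : GoodRep (⇑(↑g : Equiv.Perm (Fin N → ℤ))) S k L.1 L' :=
        ⟨hL'r, hcommL, ⟨ci, Ai, hAi, hfi⟩, hmemG⟩
      have h1 := germMap_eq (hmem g) L hrep
      show germMap (↑g : Equiv.Perm (Fin N → ℤ)) (hmem g) (germOf S k L) = germOf S k L
      rw [h1]
      exact germOf_eq_iff.mpr hcommIm
  · -- range
    apply Set.eq_of_subset_of_subset
    · rintro _ ⟨g, rfl⟩
      simp only [Set.mem_setOf_eq]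
      obtain ⟨T, hTorth, hTrk, hTfix⟩ := hrkLE g
      obtain ⟨𝓣, h𝓣fin, h𝓣orth, hTeq⟩ := hTorth
      subst hTeq
      have h𝓣rk : ∀ Q ∈ 𝓣, ∃ m ≤ k, IsOrthantOfRank Q m := by
        intro Q hQ
        obtain ⟨m, hm⟩ := h𝓣orth Q hQ
        refine ⟨m, ?_, hm⟩
        have hbdd : BddAbove {k' | ∃ L, IsOrthantOfRank L k' ∧ L ⊆ ⋃₀ 𝓣} :=
          ⟨N, fun m' ⟨Q', hQ', _⟩ => rank_le_N hQ'⟩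
        have hm' : m ≤ orthRank (⋃₀ 𝓣) :=
          le_csSup hbdd ⟨Q, hm, Set.subset_sUnion_of_mem hQ⟩
        exact hm'.trans hTrk
      exact moved_finite (hmem g) h𝓣fin h𝓣rk hTfix
    · intro σ hσ
      have hfin : {γ | σ γ ≠ γ}.Finite := hσ
      have hswaps : ∀ γ₁ γ₂ : Germ S k, γ₁ ≠ γ₂ → Equiv.swap γ₁ γ₂ ∈ φ.range := by
        intro γ₁ γ₂ hne12
        obtain ⟨L₁, rfl⟩ := Quot.exists_rep γ₁
        obtain ⟨L₂, rfl⟩ := Quot.exists_rep γ₂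
        have hncomm : ¬Commensurable L₁.1 L₂.1 := fun h => hne12 (Quot.sound h)
        obtain ⟨g, hpei, hrk, heval⟩ := swap_realized hS L₁ L₂ hncomm
        have hgmem : g ∈ Gk := by
          have h2 : g ∈ (Gk : Set (Equiv.Perm (Fin N → ℤ))) := by
            rw [hGk]; exact ⟨hpei, hrk⟩
          exact h2
        refine ⟨⟨g, hgmem⟩, ?_⟩
        apply Equiv.ext
        intro γ
        exact heval (hmem ⟨g, hgmem⟩) γ
      have hmem2 : σ ∈ φ.range :=
        finitary_mem_of_swaps φ.range hswaps hfin.toFinset.card σ hfin le_rfl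
      obtain ⟨g, hg⟩ := hmem2
      exact ⟨g, hg⟩

end PeiPaper
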